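/- arXiv:1401.0154 — 5 statements merged into one kernel-verified Lean document; each statement's English description precedes it below -/
import Mathlib

section
/- Let G=(V,D) be a finite symmetric digraph with weight w and 1-form θ, and let U = SC be the twisted Szegedy walk with discriminant T = d_A d_B*. Let φ ∈ ℝ with sin φ ≠ 0 and let ν ∈ ℓ²(V), ν ≠ 0, satisfy T ν = (cos φ) ν. Then the vector ψ := (I − e^{iφ} S) d_A* ν satisfies ‖ψ‖² = 2 sin²φ · ‖ν‖² (in particular ψ ≠ 0) and U ψ = e^{iφ} ψ; that is, e^{iφ} is an eigenvalue of U with eigenvector ψ. -/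
open Finset

/-- A finite symmetric digraph: finite nonempty vertex and arc sets, origin/terminus maps,
and a fixed-point-free involutive arc reversal with `o (rev e) = t e`; every vertex has
out-degree at least one. -/
structure SymDigraph where
  V : Type
  D : Type
  [fintypeV : Fintype V]
  [fintypeD : Fintype D]
  [decEqV : DecidableEq V]
  [decEqD : DecidableEq D]
  [nonemptyV : Nonempty V]
  o : D → V
  t : D → V
  rev : D → D
  rev_ne : ∀ e, rev e ≠ e
  rev_rev : ∀ e, rev (rev e) = e
  o_rev : ∀ e, o (rev e) = t e
  exists_arc : ∀ u : V, ∃ e : D, o e = u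

attribute [instance] SymDigraph.fintypeV SymDigraph.fintypeD SymDigraph.decEqV
  SymDigraph.decEqD SymDigraph.nonemptyV

namespace SymDigraph

variable (G : SymDigraph)

/-- out-degree of a vertex -/
def deg (u : G.V) : ℕ := (univ.filter fun e => G.o e = u).card

/-- a weight: never zero and with unit square-sum over the arcs leaving each vertex -/
def IsWeight (w : G.D → ℂ) : Prop :=
  (∀ e, w e ≠ 0) ∧
    ∀ u : G.V, ∑ e ∈ univ.filter (fun e => G.o e = u), ‖w e‖ ^ 2 = 1

/-- a 1-form: antisymmetric under arc reversal -/
def IsOneForm (θ : G.D → ℝ) : Prop := ∀ e, θ (G.rev e) = - θ e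

/-- the boundary operator `d_A : ℓ²(D) → ℓ²(V)`, `(d_A φ)(v) = ∑_{e : o e = v} conj (w e) * φ e` -/
noncomputable def dA (w : G.D → ℂ) : (G.D → ℂ) →ₗ[ℂ] (G.V → ℂ) where
  toFun φ := fun v => ∑ e ∈ univ.filter (fun e => G.o e = v), (starRingEnd ℂ) (w e) * φ e
  map_add' φ ψ := by
    funext v
    simp [mul_add, Finset.sum_add_distrib]
  map_smul' c φ := by
    funext v
    simp only [Pi.smul_apply, smul_eq_mul, RingHom.id_apply, Finset.mul_sum]
    exact Finset.sum_congr rfl fun e _ => by ring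

/-- the boundary operator `d_B`, `(d_B φ)(v) = ∑_{e : o e = v} conj (w e) e^{-iθ(e)} φ(ē)` -/
noncomputable def dB (w : G.D → ℂ) (θ : G.D → ℝ) : (G.D → ℂ) →ₗ[ℂ] (G.V → ℂ) where
  toFun φ := fun v => ∑ e ∈ univ.filter (fun e => G.o e = v),
      (starRingEnd ℂ) (w e) * Complex.exp (-(θ e : ℂ) * Complex.I) * φ (G.rev e)
  map_add' φ ψ := by
    funext v
    simp [mul_add, Finset.sum_add_distrib]
  map_smul' c φ := by
    funext v
    simp only [Pi.smul_apply, smul_eq_mul, RingHom.id_apply, Finset.mul_sum]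
    exact Finset.sum_congr rfl fun e _ => by ring

/-- the coboundary operator `d_A* : ℓ²(V) → ℓ²(D)`, `(d_A* f)(e) = w e * f (o e)` -/
noncomputable def dAadj (w : G.D → ℂ) : (G.V → ℂ) →ₗ[ℂ] (G.D → ℂ) where
  toFun f := fun e => w e * f (G.o e)
  map_add' f g := by funext e; simp [mul_add]
  map_smul' c f := by funext e; simp only [Pi.smul_apply, smul_eq_mul, RingHom.id_apply]; ring

/-- the coboundary operator `d_B*`, `(d_B* f)(e) = e^{-iθ(e)} w(ē) f (t e)` -/
noncomputable def dBadj (w : G.D → ℂ) (θ : G.D → ℝ) : (G.V → ℂ) →ₗ[ℂ] (G.D → ℂ) where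
  toFun f := fun e => Complex.exp (-(θ e : ℂ) * Complex.I) * w (G.rev e) * f (G.t e)
  map_add' f g := by funext e; simp [mul_add]
  map_smul' c f := by funext e; simp only [Pi.smul_apply, smul_eq_mul, RingHom.id_apply]; ring

/-- the twisted shift `S`, `(Sφ)(e) = e^{-iθ(e)} φ(ē)` -/
noncomputable def shiftS (θ : G.D → ℝ) : (G.D → ℂ) →ₗ[ℂ] (G.D → ℂ) where
  toFun φ := fun e => Complex.exp (-(θ e : ℂ) * Complex.I) * φ (G.rev e)
  map_add' φ ψ := by funext e; simp [mul_add]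
  map_smul' c φ := by funext e; simp only [Pi.smul_apply, smul_eq_mul, RingHom.id_apply]; ring

/-- the coin operator `C = 2 d_A* d_A - I` -/
noncomputable def coinC (w : G.D → ℂ) : (G.D → ℂ) →ₗ[ℂ] (G.D → ℂ) :=
  (2 : ℂ) • (G.dAadj w ∘ₗ G.dA w) - LinearMap.id

/-- the twisted Szegedy walk `U = S C` -/
noncomputable def walkU (w : G.D → ℂ) (θ : G.D → ℝ) : (G.D → ℂ) →ₗ[ℂ] (G.D → ℂ) :=
  G.shiftS θ ∘ₗ G.coinC w

/-- the discriminant operator `T = d_A d_B*` -/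
noncomputable def discT (w : G.D → ℂ) (θ : G.D → ℝ) : (G.V → ℂ) →ₗ[ℂ] (G.V → ℂ) :=
  G.dA w ∘ₗ G.dBadj w θ

/-- the standard Hermitian inner product on `ℓ²(D)` -/
noncomputable def innD (φ ψ : G.D → ℂ) : ℂ := ∑ e, (starRingEnd ℂ) (φ e) * ψ e

/-- the standard Hermitian inner product on `ℓ²(V)` -/
noncomputable def innV (f g : G.V → ℂ) : ℂ := ∑ v, (starRingEnd ℂ) (f v) * g v

end SymDigraph

namespace SymDigraphProof

open SymDigraph Complex

variable (G : SymDigraph) (w : G.D → ℂ) (θ : G.D → ℝ)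

lemma dA_dAadj (hw : G.IsWeight w) (f : G.V → ℂ) : G.dA w (G.dAadj w f) = f := by
  funext v
  show ∑ e ∈ univ.filter (fun e => G.o e = v),
      (starRingEnd ℂ) (w e) * (w e * f (G.o e)) = f v
  have : ∀ e ∈ univ.filter (fun e => G.o e = v),
      (starRingEnd ℂ) (w e) * (w e * f (G.o e))
        = ((‖w e‖ ^ 2 : ℝ) : ℂ) * f v := by
    intro e he
    simp only [mem_filter] at he
    rw [he.2]
    rw [← Complex.normSq_eq_norm_sq, Complex.normSq_eq_conj_mul_self]
    ring
  rw [Finset.sum_congr rfl this, ← Finset.sum_mul, ← Complex.ofReal_sum, hw.2 v]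
  simp

lemma shiftS_dAadj (f : G.V → ℂ) : G.shiftS θ (G.dAadj w f) = G.dBadj w θ f := by
  funext e
  show Complex.exp (-(θ e : ℂ) * Complex.I) * (w (G.rev e) * f (G.o (G.rev e)))
      = Complex.exp (-(θ e : ℂ) * Complex.I) * w (G.rev e) * f (G.t e)
  rw [G.o_rev]; ring

lemma shiftS_shiftS (hθ : G.IsOneForm θ) (x : G.D → ℂ) :
    G.shiftS θ (G.shiftS θ x) = x := by
  funext e
  show Complex.exp (-(θ e : ℂ) * Complex.I) *
      (Complex.exp (-(θ (G.rev e) : ℂ) * Complex.I) * x (G.rev (G.rev e))) = x e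
  rw [hθ e, G.rev_rev, ← mul_assoc, ← Complex.exp_add]
  push_cast
  ring_nf
  simp

lemma adjoint_rel (f : G.V → ℂ) (φ : G.D → ℂ) :
    G.innD (G.dAadj w f) φ = G.innV f (G.dA w φ) := by
  unfold SymDigraph.innD SymDigraph.innV
  show ∑ e, (starRingEnd ℂ) (w e * f (G.o e)) * φ e
      = ∑ v, (starRingEnd ℂ) (f v) *
          ∑ e ∈ univ.filter (fun e => G.o e = v), (starRingEnd ℂ) (w e) * φ e
  rw [← Finset.sum_fiberwise univ G.o (fun e => (starRingEnd ℂ) (w e * f (G.o e)) * φ e)]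
  refine Finset.sum_congr rfl fun v _ => ?_
  rw [Finset.mul_sum]
  refine Finset.sum_congr rfl fun e he => ?_
  simp only [mem_filter] at he
  rw [he.2, map_mul]
  ring

lemma shiftS_unitary (x y : G.D → ℂ) :
    G.innD (G.shiftS θ x) (G.shiftS θ y) = G.innD x y := by
  unfold SymDigraph.innD
  have key : ∀ e, (starRingEnd ℂ) (Complex.exp (-(θ e : ℂ) * Complex.I) * x (G.rev e)) *
      (Complex.exp (-(θ e : ℂ) * Complex.I) * y (G.rev e))
      = (starRingEnd ℂ) (x (G.rev e)) * y (G.rev e) := by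
    intro e
    rw [map_mul, ← Complex.exp_conj]
    have : (starRingEnd ℂ) (-(θ e : ℂ) * Complex.I) = (θ e : ℂ) * Complex.I := by
      simp [Complex.conj_I]
    rw [this]
    have h1 : Complex.exp ((θ e : ℂ) * Complex.I) * Complex.exp (-(θ e : ℂ) * Complex.I)
        = 1 := by rw [← Complex.exp_add]; ring_nf; exact Complex.exp_zero
    calc Complex.exp ((θ e : ℂ) * Complex.I) * (starRingEnd ℂ) (x (G.rev e)) *
          (Complex.exp (-(θ e : ℂ) * Complex.I) * y (G.rev e))
        = (Complex.exp ((θ e : ℂ) * Complex.I) * Complex.exp (-(θ e : ℂ) * Complex.I)) *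
          ((starRingEnd ℂ) (x (G.rev e)) * y (G.rev e)) := by ring
      _ = _ := by rw [h1, one_mul]
  calc ∑ e, (starRingEnd ℂ) (Complex.exp (-(θ e : ℂ) * Complex.I) * x (G.rev e)) *
        (Complex.exp (-(θ e : ℂ) * Complex.I) * y (G.rev e))
      = ∑ e, (starRingEnd ℂ) (x (G.rev e)) * y (G.rev e) :=
        Finset.sum_congr rfl fun e _ => key e
    _ = ∑ e, (starRingEnd ℂ) (x e) * y e := by
        apply Fintype.sum_equiv (Function.Involutive.toPerm G.rev G.rev_rev)
        intro e; rfl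

end SymDigraphProof

/-- If `T ν = cos φ · ν` with `sin φ ≠ 0` and `ν ≠ 0`, then
`ψ = (I − e^{iφ} S) d_A* ν` satisfies `‖ψ‖² = 2 sin²φ ‖ν‖²` (in particular `ψ ≠ 0`) and
`U ψ = e^{iφ} ψ`; that is, `e^{iφ}` is an eigenvalue of the twisted Szegedy walk `U`. -/
theorem szegedy_eigenvalue_lift (G : SymDigraph) (w : G.D → ℂ) (θ : G.D → ℝ)
    (hw : G.IsWeight w) (hθ : G.IsOneForm θ)
    (φ : ℝ) (hφ : Real.sin φ ≠ 0) (ν : G.V → ℂ) (hν : ν ≠ 0)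
    (hT : G.discT w θ ν = (Real.cos φ : ℂ) • ν) :
    (∑ e, ‖
        ((G.dAadj w ν - Complex.exp (Complex.I * (φ : ℂ)) • G.shiftS θ (G.dAadj w ν)) e)‖ ^ 2
      = 2 * Real.sin φ ^ 2 * ∑ v, ‖ν v‖ ^ 2) ∧
    (G.dAadj w ν - Complex.exp (Complex.I * (φ : ℂ)) • G.shiftS θ (G.dAadj w ν)) ≠ 0 ∧
    G.walkU w θ (G.dAadj w ν - Complex.exp (Complex.I * (φ : ℂ)) • G.shiftS θ (G.dAadj w ν))
      = Complex.exp (Complex.I * (φ : ℂ)) •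
        (G.dAadj w ν - Complex.exp (Complex.I * (φ : ℂ)) • G.shiftS θ (G.dAadj w ν)) := by
  classical
  set c : ℂ := Complex.exp (Complex.I * (φ : ℂ)) with hc
  set L : G.D → ℂ := G.dAadj w ν with hL
  set ψ : G.D → ℂ := L - c • G.shiftS θ L with hψ
  set d : ℂ := Complex.exp (-(Complex.I * (φ : ℂ))) with hd
  have hinv : c * d = 1 := by
    rw [hc, hd, ← Complex.exp_add, add_neg_cancel, Complex.exp_zero]
  have hconj : (starRingEnd ℂ) c = d := by
    rw [hc, hd, ← Complex.exp_conj]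
    congr 1
    simp [Complex.conj_I]
  have hcos : 2 * ((Real.cos φ : ℝ) : ℂ) = c + d := by
    rw [Complex.ofReal_cos, Complex.two_cos, hc, hd]
    ring_nf
  have h1 : G.dA w L = ν := SymDigraphProof.dA_dAadj G w hw ν
  have h2 : G.dA w (G.shiftS θ L) = ((Real.cos φ : ℝ) : ℂ) • ν := by
    rw [hL, SymDigraphProof.shiftS_dAadj]
    exact hT
  have h3 : ∀ x : G.D → ℂ, G.shiftS θ (G.shiftS θ x) = x :=
    SymDigraphProof.shiftS_shiftS G θ hθ
  -- eigenvector equation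
  have hdAψ : G.dA w ψ = ((1 : ℂ) - c * ((Real.cos φ : ℝ) : ℂ)) • ν := by
    rw [hψ, map_sub, map_smul, h1, h2, smul_smul, sub_smul, one_smul]
  have hkey : 2 * ((1 : ℂ) - c * ((Real.cos φ : ℝ) : ℂ)) = -(c * c) + 1 := by
    linear_combination -hinv - c * hcos
  have hCψ : G.coinC w ψ = (-(c * c)) • L + c • G.shiftS θ L := by
    have e1 : G.coinC w ψ = (2 * ((1 : ℂ) - c * ((Real.cos φ : ℝ) : ℂ))) • L - ψ := by
      show (2 : ℂ) • (G.dAadj w (G.dA w ψ)) - ψ = _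
      rw [hdAψ, map_smul, smul_smul, hL]
    rw [e1, hkey, hψ]
    module
  have hUψ : G.walkU w θ ψ = c • ψ := by
    show G.shiftS θ (G.coinC w ψ) = c • ψ
    rw [hCψ, map_add, map_smul, map_smul, h3, hψ]
    module
  -- norm computation
  have habs : ∀ (ι : Type) (_ : Fintype ι) (x : ι → ℂ),
      ∑ i, (starRingEnd ℂ) (x i) * x i = ((∑ i, ‖x i‖ ^ 2 : ℝ) : ℂ) := by
    intro ι _ x
    rw [Complex.ofReal_sum]
    refine Finset.sum_congr rfl fun i _ => ?_
    rw [← Complex.normSq_eq_conj_mul_self, Complex.normSq_eq_norm_sq]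
  set N : ℂ := G.innV ν ν with hN
  have n1 : G.innD L L = N := by
    rw [hL, SymDigraphProof.adjoint_rel, h1]
  have nsmul : G.innV ν (((Real.cos φ : ℝ) : ℂ) • ν) = ((Real.cos φ : ℝ) : ℂ) * N := by
    rw [hN]
    unfold SymDigraph.innV
    rw [Finset.mul_sum]
    exact Finset.sum_congr rfl fun v _ => by simp; ring
  have n2 : G.innD L (G.shiftS θ L) = ((Real.cos φ : ℝ) : ℂ) * N := by
    rw [hL, SymDigraphProof.adjoint_rel, h2]
    exact nsmul
  have n3 : G.innD (G.shiftS θ L) L = ((Real.cos φ : ℝ) : ℂ) * N := by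
    calc G.innD (G.shiftS θ L) L
        = G.innD (G.shiftS θ L) (G.shiftS θ (G.shiftS θ L)) := by rw [h3]
      _ = G.innD L (G.shiftS θ L) := SymDigraphProof.shiftS_unitary G θ _ _
      _ = _ := n2
  have n4 : G.innD (G.shiftS θ L) (G.shiftS θ L) = N := by
    rw [SymDigraphProof.shiftS_unitary, n1]
  have hexpand : G.innD ψ ψ
      = G.innD L L - c * G.innD L (G.shiftS θ L)
        - (starRingEnd ℂ) c * G.innD (G.shiftS θ L) L
        + ((starRingEnd ℂ) c * c) * G.innD (G.shiftS θ L) (G.shiftS θ L) := by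
    rw [hψ]
    unfold SymDigraph.innD
    have : ∀ e, (starRingEnd ℂ) ((L - c • G.shiftS θ L) e) * ((L - c • G.shiftS θ L) e)
        = (starRingEnd ℂ) (L e) * L e
          - c * ((starRingEnd ℂ) (L e) * G.shiftS θ L e)
          - (starRingEnd ℂ) c * ((starRingEnd ℂ) (G.shiftS θ L e) * L e)
          + ((starRingEnd ℂ) c * c) *
              ((starRingEnd ℂ) (G.shiftS θ L e) * G.shiftS θ L e) := by
      intro e
      simp only [Pi.sub_apply, Pi.smul_apply, smul_eq_mul, map_sub, map_mul]
      ring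
    rw [Finset.sum_congr rfl fun e _ => this e, Finset.sum_add_distrib,
      Finset.sum_sub_distrib, Finset.sum_sub_distrib,
      ← Finset.mul_sum, ← Finset.mul_sum, ← Finset.mul_sum]
  have hsin : ((2 * Real.sin φ ^ 2 : ℝ) : ℂ)
      = 2 - 2 * ((Real.cos φ : ℝ) : ℂ) * ((Real.cos φ : ℝ) : ℂ) := by
    have hr : 2 * Real.sin φ ^ 2 = 2 - 2 * Real.cos φ * Real.cos φ := by
      nlinarith [Real.sin_sq_add_cos_sq φ]
    rw [hr]
    push_cast
    ring
  have hnorm : G.innD ψ ψ = ((2 * Real.sin φ ^ 2 : ℝ) : ℂ) * N := by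
    rw [hexpand, n1, n2, n3, n4, hconj, hsin]
    have hdc : d * c = 1 := by rw [mul_comm]; exact hinv
    linear_combination (N * ((Real.cos φ : ℝ) : ℂ)) * hcos + N * hdc
  have hinnD : G.innD ψ ψ = ((∑ e, ‖ψ e‖ ^ 2 : ℝ) : ℂ) :=
    habs G.D G.fintypeD ψ
  have hinnV : N = ((∑ v, ‖ν v‖ ^ 2 : ℝ) : ℂ) :=
    habs G.V G.fintypeV ν
  have hmain : (∑ e, ‖ψ e‖ ^ 2 : ℝ)
      = 2 * Real.sin φ ^ 2 * ∑ v, ‖ν v‖ ^ 2 := by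
    have := hnorm
    rw [hinnD, hinnV] at this
    exact_mod_cast this
  refine ⟨hmain, ?_, hUψ⟩
  intro h0
  rw [h0] at hmain
  simp only [Pi.zero_apply, map_zero, norm_zero, ne_eq, OfNat.ofNat_ne_zero,
    not_false_eq_true, zero_pow, Finset.sum_const_zero] at hmain
  have hs : 0 < 2 * Real.sin φ ^ 2 := by positivity
  have hsum : ∑ v, ‖ν v‖ ^ 2 = 0 := by
    rcases mul_eq_zero.1 hmain.symm with h | h
    · exact absurd h (ne_of_gt hs)
    · exact h
  have hall : ∀ v ∈ (univ : Finset G.V), ‖ν v‖ ^ 2 = 0 :=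
    (Finset.sum_eq_zero_iff_of_nonneg fun v _ => by positivity).1 hsum
  apply hν
  funext v
  have := hall v (Finset.mem_univ v)
  have : ‖ν v‖ = 0 := by nlinarith [this]
  exact norm_eq_zero.1 this
end

section
/- Let G=(V,D) be a finite symmetric digraph with weight w and 1-form θ, with twisted Szegedy walk U = SC and discriminant T = d_A d_B*. For every m ∈ ℓ²(V): T m = m if and only if d_A* m = d_B* m, and T m = −m if and only if d_A* m = −d_B* m. Consequently, if T m = m then U(d_A* m) = d_A* m, and if T m = −m then U(d_A* m) = −d_A* m. -/
open Finset

section Aux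
open SymDigraph

lemma aux_dA_dAadj (G : SymDigraph) (w : G.D → ℂ) (hw : G.IsWeight w) (f : G.V → ℂ) :
    G.dA w (G.dAadj w f) = f := by
  funext v
  simp only [dA, dAadj, LinearMap.coe_mk, AddHom.coe_mk]
  have h1 : ∀ e ∈ univ.filter (fun e => G.o e = v),
      (starRingEnd ℂ) (w e) * (w e * f (G.o e))
        = ((‖w e‖ ^ 2 : ℝ) : ℂ) * f v := by
    intro e he
    rw [Finset.mem_filter] at he
    rw [he.2, show (starRingEnd ℂ) (w e) * (w e * f v) = (w e * (starRingEnd ℂ) (w e)) * f v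
      from by ring, Complex.mul_conj, Complex.sq_norm]
  rw [Finset.sum_congr rfl h1, ← Finset.sum_mul, ← Complex.ofReal_sum, hw.2 v]
  simp

lemma aux_S_dAadj (G : SymDigraph) (w : G.D → ℂ) (θ : G.D → ℝ) (f : G.V → ℂ) :
    G.shiftS θ (G.dAadj w f) = G.dBadj w θ f := by
  funext e
  simp only [shiftS, dAadj, dBadj, LinearMap.coe_mk, AddHom.coe_mk, G.o_rev]
  ring

lemma aux_adjoint (G : SymDigraph) (w : G.D → ℂ) (f : G.V → ℂ) (φ : G.D → ℂ) :
    ∑ e, (starRingEnd ℂ) (G.dAadj w f e) * φ e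
      = ∑ v, (starRingEnd ℂ) (f v) * G.dA w φ v := by
  simp only [dA, dAadj, LinearMap.coe_mk, AddHom.coe_mk, map_mul, Finset.mul_sum]
  rw [← Finset.sum_fiberwise univ G.o
    (fun e => (starRingEnd ℂ) (w e) * (starRingEnd ℂ) (f (G.o e)) * φ e)]
  refine Finset.sum_congr rfl fun v _ => Finset.sum_congr rfl fun e he => ?_
  rw [Finset.mem_filter] at he
  rw [he.2]; ring

lemma aux_S_isom (G : SymDigraph) (θ : G.D → ℝ) (φ ψ : G.D → ℂ) :
    ∑ e, (starRingEnd ℂ) (G.shiftS θ φ e) * G.shiftS θ ψ e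
      = ∑ e, (starRingEnd ℂ) (φ e) * ψ e := by
  have key : ∀ e, (starRingEnd ℂ) (G.shiftS θ φ e) * G.shiftS θ ψ e
      = (starRingEnd ℂ) (φ (G.rev e)) * ψ (G.rev e) := by
    intro e
    simp only [shiftS, LinearMap.coe_mk, AddHom.coe_mk, map_mul]
    have hexp : (starRingEnd ℂ) (Complex.exp (-(θ e : ℂ) * Complex.I)) *
        Complex.exp (-(θ e : ℂ) * Complex.I) = 1 := by
      rw [← Complex.exp_conj, ← Complex.exp_add]
      have : (starRingEnd ℂ) (-(θ e : ℂ) * Complex.I) + (-(θ e : ℂ) * Complex.I) = 0 := by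
        simp [Complex.conj_I, Complex.conj_ofReal]
      rw [this, Complex.exp_zero]
    rw [mul_mul_mul_comm, hexp, one_mul]
  simp only [key]
  exact Fintype.sum_equiv ⟨G.rev, G.rev, fun e => G.rev_rev e, fun e => G.rev_rev e⟩ _ _
    (fun e => rfl)

lemma aux_pos (G : SymDigraph) (φ : G.D → ℂ)
    (h : ∑ e, (starRingEnd ℂ) (φ e) * φ e = 0) : φ = 0 := by
  have h1 : ∑ e, (Complex.normSq (φ e) : ℂ) = 0 := by
    rw [← h]
    exact Finset.sum_congr rfl fun e _ => by rw [mul_comm, Complex.mul_conj]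
  rw [← Complex.ofReal_sum] at h1
  have h2 : ∑ e, Complex.normSq (φ e) = 0 := by exact_mod_cast h1
  funext e
  have := (Finset.sum_eq_zero_iff_of_nonneg
    (fun e _ => Complex.normSq_nonneg (φ e))).mp h2 e (Finset.mem_univ e)
  simpa using Complex.normSq_eq_zero.mp this

end Aux

/-- For every `m ∈ ℓ²(V)`: `T m = m` iff `d_A* m = d_B* m`, and `T m = −m` iff
`d_A* m = −d_B* m`. Consequently, if `T m = m` then `U(d_A* m) = d_A* m`, and if `T m = −m`
then `U(d_A* m) = −d_A* m`. -/
theorem discriminant_pm_one_eigenvectors (G : SymDigraph) (w : G.D → ℂ) (θ : G.D → ℝ)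
    (hw : G.IsWeight w) (hθ : G.IsOneForm θ) :
    ∀ m : G.V → ℂ,
      (G.discT w θ m = m ↔ G.dAadj w m = G.dBadj w θ m) ∧
      (G.discT w θ m = -m ↔ G.dAadj w m = -(G.dBadj w θ m)) ∧
      (G.discT w θ m = m → G.walkU w θ (G.dAadj w m) = G.dAadj w m) ∧
      (G.discT w θ m = -m → G.walkU w θ (G.dAadj w m) = -(G.dAadj w m)) := by
  intro m
  set a := G.dAadj w m with ha
  set b := G.dBadj w θ m with hb
  have hSab : G.shiftS θ a = b := aux_S_dAadj G w θ m
  have hTdef : G.discT w θ m = G.dA w b := rfl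
  have haa : ∑ e, (starRingEnd ℂ) (a e) * a e = ∑ v, (starRingEnd ℂ) (m v) * m v := by
    rw [ha, aux_adjoint, aux_dA_dAadj G w hw]
  have hbb : ∑ e, (starRingEnd ℂ) (b e) * b e = ∑ v, (starRingEnd ℂ) (m v) * m v := by
    rw [← hSab, aux_S_isom, haa]
  have hab : ∑ e, (starRingEnd ℂ) (a e) * b e
      = ∑ v, (starRingEnd ℂ) (m v) * G.discT w θ m v := by
    rw [ha, aux_adjoint, hTdef]
  have hc : (starRingEnd ℂ) (∑ v, (starRingEnd ℂ) (m v) * m v)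
      = ∑ v, (starRingEnd ℂ) (m v) * m v := by
    rw [map_sum]
    exact Finset.sum_congr rfl fun v _ => by rw [map_mul, Complex.conj_conj]; ring
  have hba : ∑ e, (starRingEnd ℂ) (b e) * a e
      = (starRingEnd ℂ) (∑ e, (starRingEnd ℂ) (a e) * b e) := by
    rw [map_sum]
    exact Finset.sum_congr rfl fun e _ => by rw [map_mul, Complex.conj_conj]; ring
  have iff1 : G.discT w θ m = m ↔ a = b := by
    constructor
    · intro h
      have h1 : ∑ e, (starRingEnd ℂ) (a e) * b e = ∑ v, (starRingEnd ℂ) (m v) * m v := by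
        rw [hab, h]
      have hz : ∑ e, (starRingEnd ℂ) ((a - b) e) * (a - b) e = 0 := by
        have expand : ∀ e, (starRingEnd ℂ) ((a - b) e) * (a - b) e
            = (starRingEnd ℂ) (a e) * a e - (starRingEnd ℂ) (a e) * b e
              - (starRingEnd ℂ) (b e) * a e + (starRingEnd ℂ) (b e) * b e := by
          intro e; simp only [Pi.sub_apply, map_sub]; ring
        rw [Finset.sum_congr rfl (fun e _ => expand e), Finset.sum_add_distrib,
          Finset.sum_sub_distrib, Finset.sum_sub_distrib, haa, hbb, h1, hba, h1, hc]
        ring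
      exact sub_eq_zero.mp (aux_pos G (a - b) hz)
    · intro h
      rw [hTdef, ← h, ha]
      exact aux_dA_dAadj G w hw m
  have iff2 : G.discT w θ m = -m ↔ a = -b := by
    constructor
    · intro h
      have h1 : ∑ e, (starRingEnd ℂ) (a e) * b e
          = -∑ v, (starRingEnd ℂ) (m v) * m v := by
        rw [hab, h]
        simp [mul_neg]
      have hz : ∑ e, (starRingEnd ℂ) ((a + b) e) * (a + b) e = 0 := by
        have expand : ∀ e, (starRingEnd ℂ) ((a + b) e) * (a + b) e
            = (starRingEnd ℂ) (a e) * a e + (starRingEnd ℂ) (a e) * b e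
              + (starRingEnd ℂ) (b e) * a e + (starRingEnd ℂ) (b e) * b e := by
          intro e; simp only [Pi.add_apply, map_add]; ring
        rw [Finset.sum_congr rfl (fun e _ => expand e), Finset.sum_add_distrib,
          Finset.sum_add_distrib, Finset.sum_add_distrib, haa, hbb, h1, hba, h1, map_neg, hc]
        ring
      exact eq_neg_of_add_eq_zero_left (aux_pos G (a + b) hz)
    · intro h
      have hb' : b = -a := by rw [h, neg_neg]
      rw [hTdef, hb', map_neg, ha, aux_dA_dAadj G w hw]
  have hCa : G.coinC w a = a := by
    simp only [SymDigraph.coinC, LinearMap.sub_apply, LinearMap.smul_apply, LinearMap.comp_apply,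
      LinearMap.id_apply]
    rw [ha, aux_dA_dAadj G w hw, two_smul]
    abel
  have hUa : G.walkU w θ a = b := by
    show G.shiftS θ (G.coinC w a) = b
    rw [hCa, hSab]
  refine ⟨iff1, iff2, ?_, ?_⟩
  · intro h
    rw [hUa, ← iff1.mp h]
  · intro h
    have h2 : a = -b := iff2.mp h
    rw [hUa, h2, neg_neg]
end

section
/- Let G=(V,D) be a finite symmetric digraph with weight w and 1-form θ. Set L := ran(d_A*) + ran(d_B*) ⊆ ℓ²(D), m₁ := dim ker(T − I), and m₋₁ := dim ker(T + I), where T = d_A d_B*. Then dim( L ∩ ker(S − I) ) = |V| − m₋₁ and dim( L ∩ ker(S + I) ) = |V| − m₁, where S is the twisted shift. -/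
open Finset

section Aux

namespace SymDigraph

variable (G : SymDigraph) (w : G.D → ℂ) (θ : G.D → ℝ)

lemma dA_apply (φ : G.D → ℂ) (v : G.V) :
    G.dA w φ v = ∑ e ∈ univ.filter (fun e => G.o e = v), (starRingEnd ℂ) (w e) * φ e := rfl

lemma dAadj_apply (f : G.V → ℂ) (e : G.D) : G.dAadj w f e = w e * f (G.o e) := rfl

lemma dBadj_apply (f : G.V → ℂ) (e : G.D) :
    G.dBadj w θ f e = Complex.exp (-(θ e : ℂ) * Complex.I) * w (G.rev e) * f (G.t e) := rfl

lemma shiftS_apply (φ : G.D → ℂ) (e : G.D) :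
    G.shiftS θ φ e = Complex.exp (-(θ e : ℂ) * Complex.I) * φ (G.rev e) := rfl

lemma conj_mul_self (z : ℂ) : (starRingEnd ℂ) z * z = ((‖z‖ ^ 2 : ℝ) : ℂ) := by
  rw [Complex.conj_mul']; norm_cast

lemma conj_exp_mul (x : ℝ) :
    (starRingEnd ℂ) (Complex.exp (-(x:ℂ)*Complex.I)) * Complex.exp (-(x:ℂ)*Complex.I) = 1 := by
  rw [← Complex.exp_conj, ← Complex.exp_add]; simp

lemma shiftS_shiftS (hθ : G.IsOneForm θ) (φ : G.D → ℂ) : G.shiftS θ (G.shiftS θ φ) = φ := by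
  funext e
  rw [shiftS_apply, shiftS_apply, G.rev_rev, hθ e, ← mul_assoc, ← Complex.exp_add]
  push_cast
  ring_nf
  simp

lemma S_dAadj (f : G.V → ℂ) : G.shiftS θ (G.dAadj w f) = G.dBadj w θ f := by
  funext e
  rw [shiftS_apply, dAadj_apply, dBadj_apply, G.o_rev, mul_assoc]

lemma S_dBadj (hθ : G.IsOneForm θ) (f : G.V → ℂ) :
    G.shiftS θ (G.dBadj w θ f) = G.dAadj w f := by
  rw [← S_dAadj G w θ, shiftS_shiftS G θ hθ]

lemma dA_dAadj (hw : G.IsWeight w) (f : G.V → ℂ) : G.dA w (G.dAadj w f) = f := by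
  funext v
  rw [dA_apply]
  have h1 : ∀ e ∈ univ.filter (fun e => G.o e = v),
      (starRingEnd ℂ) (w e) * G.dAadj w f e = ((‖w e‖^2 : ℝ) : ℂ) * f v := by
    intro e he
    rw [mem_filter] at he
    rw [dAadj_apply, ← mul_assoc, conj_mul_self, he.2]
  rw [Finset.sum_congr rfl h1, ← Finset.sum_mul]
  have h2 : (∑ e ∈ univ.filter (fun e => G.o e = v), ((‖w e‖^2 : ℝ) : ℂ)) = 1 := by
    rw [← Complex.ofReal_sum, hw.2 v, Complex.ofReal_one]
  rw [h2, one_mul]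

/-- adjoint relation -/
lemma innD_dAadj (f : G.V → ℂ) (φ : G.D → ℂ) :
    G.innD (G.dAadj w f) φ = G.innV f (G.dA w φ) := by
  unfold innD innV
  rw [← Finset.sum_fiberwise (univ : Finset G.D) G.o
    (fun e => (starRingEnd ℂ) (G.dAadj w f e) * φ e)]
  refine Finset.sum_congr rfl fun v _ => ?_
  rw [dA_apply, Finset.mul_sum]
  refine Finset.sum_congr rfl fun e he => ?_
  rw [mem_filter] at he
  rw [dAadj_apply, map_mul, he.2]
  ring

lemma innD_conj (φ ψ : G.D → ℂ) : G.innD φ ψ = (starRingEnd ℂ) (G.innD ψ φ) := by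
  unfold innD
  rw [map_sum]
  refine Finset.sum_congr rfl fun e _ => ?_
  simp [mul_comm]

lemma innV_self_real (f : G.V → ℂ) : (starRingEnd ℂ) (G.innV f f) = G.innV f f := by
  unfold innV
  rw [map_sum]
  refine Finset.sum_congr rfl fun v _ => ?_
  simp [mul_comm]

lemma innD_shiftS (φ ψ : G.D → ℂ) : G.innD (G.shiftS θ φ) (G.shiftS θ ψ) = G.innD φ ψ := by
  unfold innD
  have hrev : Function.Involutive G.rev := G.rev_rev
  rw [← Function.Bijective.sum_comp hrev.bijective
    (fun e => (starRingEnd ℂ) (φ e) * ψ e)]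
  refine Finset.sum_congr rfl fun e _ => ?_
  rw [shiftS_apply, shiftS_apply, map_mul]
  have h := conj_exp_mul (θ e)
  calc (starRingEnd ℂ) (Complex.exp (-(θ e:ℂ)*Complex.I)) * (starRingEnd ℂ) (φ (G.rev e)) *
        (Complex.exp (-(θ e:ℂ)*Complex.I) * ψ (G.rev e))
      = ((starRingEnd ℂ) (Complex.exp (-(θ e:ℂ)*Complex.I)) * Complex.exp (-(θ e:ℂ)*Complex.I)) *
        ((starRingEnd ℂ) (φ (G.rev e)) * ψ (G.rev e)) := by ring
    _ = (starRingEnd ℂ) (φ (G.rev e)) * ψ (G.rev e) := by rw [h, one_mul]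

lemma innD_self_eq_zero (φ : G.D → ℂ) (h : G.innD φ φ = 0) : φ = 0 := by
  unfold innD at h
  have h2 : (∑ e, ‖φ e‖ ^ 2 : ℝ) = 0 := by
    have h3 : (((∑ e, ‖φ e‖ ^ 2 : ℝ)) : ℂ) = 0 := by
      rw [Complex.ofReal_sum, ← h]
      exact Finset.sum_congr rfl fun e _ => (conj_mul_self (φ e)).symm
    exact_mod_cast h3
  funext e
  have h4 := (Finset.sum_eq_zero_iff_of_nonneg
    (fun e _ => sq_nonneg (‖φ e‖))).mp h2 e (mem_univ e)
  have : ‖φ e‖ = 0 := by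
    have := sq_eq_zero_iff.mp h4
    exact this
  simpa using this

end SymDigraph

end Aux
section Aux2

namespace SymDigraph

variable (G : SymDigraph) (w : G.D → ℂ) (θ : G.D → ℝ)

lemma discT_apply (f : G.V → ℂ) : G.discT w θ f = G.dA w (G.dBadj w θ f) := rfl

lemma innD_expand_add (a b : G.D → ℂ) :
    G.innD (a + b) (a + b) = G.innD a a + G.innD a b + G.innD b a + G.innD b b := by
  unfold innD
  rw [← Finset.sum_add_distrib, ← Finset.sum_add_distrib, ← Finset.sum_add_distrib]
  refine Finset.sum_congr rfl fun e _ => ?_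
  simp only [Pi.add_apply, map_add]
  ring

lemma innD_expand_sub (a b : G.D → ℂ) :
    G.innD (a - b) (a - b) = G.innD a a - G.innD a b - G.innD b a + G.innD b b := by
  unfold innD
  rw [← Finset.sum_sub_distrib, ← Finset.sum_sub_distrib, ← Finset.sum_add_distrib]
  refine Finset.sum_congr rfl fun e _ => ?_
  simp only [Pi.sub_apply, map_sub]
  ring

lemma innV_neg_right (f g : G.V → ℂ) : G.innV f (-g) = - G.innV f g := by
  unfold innV
  rw [← Finset.sum_neg_distrib]
  refine Finset.sum_congr rfl fun v _ => ?_
  simp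

lemma ker_add_eq (hw : G.IsWeight w) (hθ : G.IsOneForm θ) :
    LinearMap.ker (G.dAadj w + G.dBadj w θ) = LinearMap.ker (G.discT w θ + LinearMap.id) := by
  ext f
  simp only [LinearMap.mem_ker, LinearMap.add_apply, LinearMap.id_apply, discT_apply]
  constructor
  · intro h
    have hB : G.dBadj w θ f = -(G.dAadj w f) := eq_neg_of_add_eq_zero_right h
    rw [hB, map_neg, dA_dAadj G w hw, neg_add_cancel]
  · intro h
    have hT : G.dA w (G.dBadj w θ f) = -f := eq_neg_of_add_eq_zero_left h
    have e1 : G.innD (G.dAadj w f) (G.dAadj w f) = G.innV f f := by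
      rw [innD_dAadj, dA_dAadj G w hw]
    have e2 : G.innD (G.dAadj w f) (G.dBadj w θ f) = - G.innV f f := by
      rw [innD_dAadj, hT, innV_neg_right]
    have e3 : G.innD (G.dBadj w θ f) (G.dAadj w f) = - G.innV f f := by
      rw [innD_conj, e2, map_neg, innV_self_real]
    have e4 : G.innD (G.dBadj w θ f) (G.dBadj w θ f) = G.innV f f := by
      rw [← S_dAadj G w θ, innD_shiftS, e1]
    have hz : G.innD (G.dAadj w f + G.dBadj w θ f) (G.dAadj w f + G.dBadj w θ f) = 0 := by
      rw [innD_expand_add, e1, e2, e3, e4]; ring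
    exact innD_self_eq_zero G _ hz

lemma ker_sub_eq (hw : G.IsWeight w) (hθ : G.IsOneForm θ) :
    LinearMap.ker (G.dAadj w - G.dBadj w θ) = LinearMap.ker (G.discT w θ - LinearMap.id) := by
  ext f
  simp only [LinearMap.mem_ker, LinearMap.sub_apply, LinearMap.id_apply, discT_apply]
  constructor
  · intro h
    have hB : G.dBadj w θ f = G.dAadj w f := (sub_eq_zero.mp h).symm
    rw [hB, dA_dAadj G w hw, sub_self]
  · intro h
    have hT : G.dA w (G.dBadj w θ f) = f := sub_eq_zero.mp h
    have e1 : G.innD (G.dAadj w f) (G.dAadj w f) = G.innV f f := by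
      rw [innD_dAadj, dA_dAadj G w hw]
    have e2 : G.innD (G.dAadj w f) (G.dBadj w θ f) = G.innV f f := by
      rw [innD_dAadj, hT]
    have e3 : G.innD (G.dBadj w θ f) (G.dAadj w f) = G.innV f f := by
      rw [innD_conj, e2, innV_self_real]
    have e4 : G.innD (G.dBadj w θ f) (G.dBadj w θ f) = G.innV f f := by
      rw [← S_dAadj G w θ, innD_shiftS, e1]
    have hz : G.innD (G.dAadj w f - G.dBadj w θ f) (G.dAadj w f - G.dBadj w θ f) = 0 := by
      rw [innD_expand_sub, e1, e2, e3, e4]; ring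
    exact innD_self_eq_zero G _ hz

lemma inter_ker_S_sub (hθ : G.IsOneForm θ) :
    (LinearMap.range (G.dAadj w) ⊔ LinearMap.range (G.dBadj w θ)) ⊓
      LinearMap.ker (G.shiftS θ - LinearMap.id) =
    LinearMap.range (G.dAadj w + G.dBadj w θ) := by
  apply le_antisymm
  · intro x hx
    rw [Submodule.mem_inf] at hx
    obtain ⟨hx1, hx2⟩ := hx
    rw [Submodule.mem_sup] at hx1
    obtain ⟨a, ha, b, hb, hab⟩ := hx1
    obtain ⟨f, rfl⟩ := ha
    obtain ⟨g, rfl⟩ := hb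
    rw [LinearMap.mem_ker, LinearMap.sub_apply, LinearMap.id_apply, sub_eq_zero] at hx2
    have hSx : G.shiftS θ x = G.dBadj w θ f + G.dAadj w g := by
      rw [← hab, map_add, S_dAadj G w θ, S_dBadj G w θ hθ]
    refine ⟨(2:ℂ)⁻¹ • (f + g), ?_⟩
    rw [map_smul, LinearMap.add_apply, map_add, map_add]
    have key : G.dAadj w f + G.dAadj w g + (G.dBadj w θ f + G.dBadj w θ g) = x + x := by
      have h1 : G.dAadj w f + G.dAadj w g + (G.dBadj w θ f + G.dBadj w θ g)
          = (G.dAadj w f + G.dBadj w θ g) + (G.dBadj w θ f + G.dAadj w g) := by abel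
      rw [h1, hab, ← hSx, hx2]
    rw [key, ← two_smul ℂ x, smul_smul]
    norm_num
  · rintro x ⟨f, rfl⟩
    rw [Submodule.mem_inf]
    refine ⟨?_, ?_⟩
    · rw [LinearMap.add_apply]
      exact Submodule.add_mem _ (Submodule.mem_sup_left ⟨f, rfl⟩)
        (Submodule.mem_sup_right ⟨f, rfl⟩)
    · rw [LinearMap.mem_ker, LinearMap.sub_apply, LinearMap.id_apply, sub_eq_zero,
        LinearMap.add_apply, map_add, S_dAadj G w θ, S_dBadj G w θ hθ]
      abel

lemma inter_ker_S_add (hθ : G.IsOneForm θ) :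
    (LinearMap.range (G.dAadj w) ⊔ LinearMap.range (G.dBadj w θ)) ⊓
      LinearMap.ker (G.shiftS θ + LinearMap.id) =
    LinearMap.range (G.dAadj w - G.dBadj w θ) := by
  apply le_antisymm
  · intro x hx
    rw [Submodule.mem_inf] at hx
    obtain ⟨hx1, hx2⟩ := hx
    rw [Submodule.mem_sup] at hx1
    obtain ⟨a, ha, b, hb, hab⟩ := hx1
    obtain ⟨f, rfl⟩ := ha
    obtain ⟨g, rfl⟩ := hb
    rw [LinearMap.mem_ker, LinearMap.add_apply, LinearMap.id_apply, add_eq_zero_iff_eq_neg] at hx2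
    have hSx : G.shiftS θ x = G.dBadj w θ f + G.dAadj w g := by
      rw [← hab, map_add, S_dAadj G w θ, S_dBadj G w θ hθ]
    refine ⟨(2:ℂ)⁻¹ • (f - g), ?_⟩
    rw [map_smul, LinearMap.sub_apply, map_sub, map_sub]
    have key : G.dAadj w f - G.dAadj w g - (G.dBadj w θ f - G.dBadj w θ g) = x + x := by
      have h1 : G.dAadj w f - G.dAadj w g - (G.dBadj w θ f - G.dBadj w θ g)
          = (G.dAadj w f + G.dBadj w θ g) - (G.dBadj w θ f + G.dAadj w g) := by abel
      rw [h1, hab, ← hSx, hx2]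
      abel
    rw [key, ← two_smul ℂ x, smul_smul]
    norm_num
  · rintro x ⟨f, rfl⟩
    rw [Submodule.mem_inf]
    refine ⟨?_, ?_⟩
    · rw [LinearMap.sub_apply, sub_eq_add_neg]
      exact Submodule.add_mem _ (Submodule.mem_sup_left ⟨f, rfl⟩)
        (Submodule.mem_sup_right (Submodule.neg_mem _ ⟨f, rfl⟩))
    · rw [LinearMap.mem_ker, LinearMap.add_apply, LinearMap.id_apply,
        LinearMap.sub_apply, map_sub, S_dAadj G w θ, S_dBadj G w θ hθ]
      abel

end SymDigraph

end Aux2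

/-- With `L = ran d_A* + ran d_B*`, `m₁ = dim ker(T − I)`,
`m₋₁ = dim ker(T + I)`: `dim (L ∩ ker(S − I)) = |V| − m₋₁` and
`dim (L ∩ ker(S + I)) = |V| − m₁`. -/
theorem inherited_space_dimensions (G : SymDigraph) (w : G.D → ℂ) (θ : G.D → ℝ)
    (hw : G.IsWeight w) (hθ : G.IsOneForm θ) :
    (Module.finrank ℂ
        ↥((LinearMap.range (G.dAadj w) ⊔ LinearMap.range (G.dBadj w θ)) ⊓
          LinearMap.ker (G.shiftS θ - LinearMap.id))
      = Fintype.card G.V -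
          Module.finrank ℂ ↥(LinearMap.ker (G.discT w θ + LinearMap.id))) ∧
    (Module.finrank ℂ
        ↥((LinearMap.range (G.dAadj w) ⊔ LinearMap.range (G.dBadj w θ)) ⊓
          LinearMap.ker (G.shiftS θ + LinearMap.id))
      = Fintype.card G.V -
          Module.finrank ℂ ↥(LinearMap.ker (G.discT w θ - LinearMap.id))) := by
  have hrank1 := LinearMap.finrank_range_add_finrank_ker (G.dAadj w + G.dBadj w θ)
  have hrank2 := LinearMap.finrank_range_add_finrank_ker (G.dAadj w - G.dBadj w θ)
  rw [Module.finrank_pi ℂ] at hrank1 hrank2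
  constructor
  · rw [SymDigraph.inter_ker_S_sub G w θ hθ, ← SymDigraph.ker_add_eq G w θ hw hθ]
    omega
  · rw [SymDigraph.inter_ker_S_add G w θ hθ, ← SymDigraph.ker_sub_eq G w θ hw hθ]
    omega
end

section
/- Let G=(V,D) be a finite connected symmetric digraph and let w be a weight on G. The following are equivalent: (i) the random walk with transition probabilities p(e) = |w(e)|² admits a reversible measure, i.e., there exists m : V → (0,∞) with m(o(e)) |w(e)|² = m(t(e)) |w(ē)|² for every arc e ∈ D; (ii) there exists a 1-form θ : D → ℝ (with θ(ē) = −θ(e)) such that 1 is an eigenvalue of the discriminant operator T^{(w,θ)} = d_A d_B*. -/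
open Finset

/-- `G` is connected: any two vertices are joined by a (possibly empty) path of arcs. -/
def SymDigraph.Connected (G : SymDigraph) : Prop :=
  ∀ u v : G.V, Relation.ReflTransGen (fun a b => ∃ e : G.D, G.o e = a ∧ G.t e = b) u v


section AuxProof

open Finset

variable (G : SymDigraph)

private lemma fiber_sum {M : Type*} [AddCommMonoid M] (F : G.D → M) :
    ∑ v, ∑ e ∈ univ.filter (fun e => G.o e = v), F e = ∑ e, F e :=
  Finset.sum_fiberwise_of_maps_to (fun x _ => mem_univ (G.o x)) F

private lemma rev_sum {M : Type*} [AddCommMonoid M] (F : G.D → M) :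
    ∑ e, F (G.rev e) = ∑ e, F e :=
  (Function.Involutive.bijective G.rev_rev).sum_comp F

private lemma t_rev (e : G.D) : G.t (G.rev e) = G.o e := by
  conv_rhs => rw [← G.rev_rev e, G.o_rev]

private lemma discT_apply (w : G.D → ℂ) (θ : G.D → ℝ) (f : G.V → ℂ) (v : G.V) :
    G.discT w θ f v = ∑ e ∈ univ.filter (fun e => G.o e = v),
      (starRingEnd ℂ) (w e) *
        (Complex.exp (-(θ e : ℂ) * Complex.I) * w (G.rev e) * f (G.t e)) := rfl

private lemma conj_phase (r s A B : ℝ) (z z' : ℂ)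
    (hz : z = (r : ℂ) * Complex.exp ((A : ℂ) * Complex.I))
    (hz' : z' = (s : ℂ) * Complex.exp ((B : ℂ) * Complex.I)) :
    (starRingEnd ℂ) z * (Complex.exp (-((B - A : ℝ) : ℂ) * Complex.I) * z')
      = ((r * s : ℝ) : ℂ) := by
  subst hz hz'
  rw [map_mul, ← Complex.exp_conj]
  simp only [map_mul, Complex.conj_ofReal, Complex.conj_I]
  push_cast
  calc (r:ℂ) * Complex.exp ((A:ℂ) * -Complex.I) *
      (Complex.exp (-((B:ℂ) - A) * Complex.I) * ((s:ℂ) * Complex.exp ((B:ℂ) * Complex.I)))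
      = (r:ℂ) * s * (Complex.exp ((A:ℂ) * -Complex.I) *
          Complex.exp (-((B:ℂ) - A) * Complex.I) * Complex.exp ((B:ℂ) * Complex.I)) := by ring
    _ = (r:ℂ) * s := by
        rw [← Complex.exp_add, ← Complex.exp_add,
          show (A:ℂ) * -Complex.I + -((B:ℂ) - A) * Complex.I + (B:ℂ) * Complex.I = 0 by ring,
          Complex.exp_zero, mul_one]

private lemma normSq_exp (x : ℝ) :
    Complex.normSq (Complex.exp (-(x : ℂ) * Complex.I)) = 1 := by
  rw [← Complex.sq_norm, Complex.norm_exp]; simp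

end AuxProof

/-- For a connected finite symmetric digraph with weight `w`, the random walk
with transition probabilities `p(e) = |w(e)|²` admits a reversible measure iff there exists a
1-form `θ` such that `1` is an eigenvalue of the discriminant `T^{(w,θ)} = d_A d_B*`. -/
theorem reversible_iff_one_eigenvalue (G : SymDigraph) (hG : G.Connected)
    (w : G.D → ℂ) (hw : G.IsWeight w) :
    (∃ m : G.V → ℝ, (∀ v, 0 < m v) ∧
        ∀ e : G.D, m (G.o e) * ‖w e‖ ^ 2
          = m (G.t e) * ‖w (G.rev e)‖ ^ 2) ↔
    (∃ θ : G.D → ℝ, G.IsOneForm θ ∧ ∃ f : G.V → ℂ, f ≠ 0 ∧ G.discT w θ f = f) :=  by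
  have hT_apply := discT_apply G
  constructor
  · -- reversible measure ⇒ eigenvalue 1
    rintro ⟨m, hm, hrev⟩
    refine ⟨fun e => (w (G.rev e)).arg - (w e).arg,
      fun e => by simp only [G.rev_rev]; ring,
      fun v => ((Real.sqrt (m v) : ℝ) : ℂ), ?_, ?_⟩
    · intro h
      obtain ⟨v⟩ := (inferInstance : Nonempty G.V)
      have h0 := congrFun h v
      simp only [Pi.zero_apply, Complex.ofReal_eq_zero] at h0
      exact (Real.sqrt_ne_zero'.mpr (hm v)) h0
    · funext v
      rw [hT_apply]
      have key : ∀ e ∈ univ.filter (fun e => G.o e = v),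
          (starRingEnd ℂ) (w e) *
            (Complex.exp (-(((w (G.rev e)).arg - (w e).arg : ℝ) : ℂ) * Complex.I) *
              w (G.rev e) * ((Real.sqrt (m (G.t e)) : ℝ) : ℂ))
          = ((‖w e‖ ^ 2 : ℝ) : ℂ) * ((Real.sqrt (m v) : ℝ) : ℂ) := by
        intro e he
        rw [mem_filter] at he
        have h1 := conj_phase (‖w e‖) (‖w (G.rev e)‖)
          (w e).arg (w (G.rev e)).arg (w e) (w (G.rev e))
          (Complex.norm_mul_exp_arg_mul_I (w e)).symm
          (Complex.norm_mul_exp_arg_mul_I (w (G.rev e))).symm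
        have hreal : ‖w (G.rev e)‖ * Real.sqrt (m (G.t e))
            = ‖w e‖ * Real.sqrt (m v) := by
          have hs : (‖w (G.rev e)‖ * Real.sqrt (m (G.t e))) ^ 2
              = (‖w e‖ * Real.sqrt (m v)) ^ 2 := by
            rw [mul_pow, mul_pow, Real.sq_sqrt (hm _).le, Real.sq_sqrt (hm _).le]
            have h2 := hrev e
            rw [he.2] at h2
            linarith
          calc ‖w (G.rev e)‖ * Real.sqrt (m (G.t e))
              = Real.sqrt ((‖w (G.rev e)‖ * Real.sqrt (m (G.t e))) ^ 2) :=
                (Real.sqrt_sq (by positivity)).symm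
            _ = Real.sqrt ((‖w e‖ * Real.sqrt (m v)) ^ 2) := by rw [hs]
            _ = ‖w e‖ * Real.sqrt (m v) := Real.sqrt_sq (by positivity)
        calc (starRingEnd ℂ) (w e) *
            (Complex.exp (-(((w (G.rev e)).arg - (w e).arg : ℝ) : ℂ) * Complex.I) *
              w (G.rev e) * ((Real.sqrt (m (G.t e)) : ℝ) : ℂ))
            = (starRingEnd ℂ) (w e) *
              (Complex.exp (-(((w (G.rev e)).arg - (w e).arg : ℝ) : ℂ) * Complex.I) *
                w (G.rev e)) * ((Real.sqrt (m (G.t e)) : ℝ) : ℂ) := by ring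
          _ = ((‖w e‖ * ‖w (G.rev e)‖ : ℝ) : ℂ) *
                ((Real.sqrt (m (G.t e)) : ℝ) : ℂ) := by rw [← h1]
          _ = ((‖w e‖ : ℝ) : ℂ) *
                ((‖w (G.rev e)‖ * Real.sqrt (m (G.t e)) : ℝ) : ℂ) := by
              push_cast; ring
          _ = ((‖w e‖ : ℝ) : ℂ) *
                ((‖w e‖ * Real.sqrt (m v) : ℝ) : ℂ) := by rw [hreal]
          _ = ((‖w e‖ ^ 2 : ℝ) : ℂ) * ((Real.sqrt (m v) : ℝ) : ℂ) := by
              push_cast; ring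
      rw [Finset.sum_congr rfl key, ← Finset.sum_mul]
      have hsum : ∑ e ∈ univ.filter (fun e => G.o e = v),
          ((‖w e‖ ^ 2 : ℝ) : ℂ) = 1 := by
        rw [← Complex.ofReal_sum, hw.2 v]
        exact Complex.ofReal_one
      rw [hsum, one_mul]
  · -- eigenvalue 1 ⇒ reversible measure
    rintro ⟨θ, hθ, f, hf, hTf⟩
    have hT : ∀ v, ∑ e ∈ univ.filter (fun e => G.o e = v),
        (starRingEnd ℂ) (w e) *
          (Complex.exp (-(θ e : ℂ) * Complex.I) * w (G.rev e) * f (G.t e)) = f v := by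
      intro v
      rw [← hT_apply w θ f v, hTf]
    have hw1 : ∀ v, ∑ e ∈ univ.filter (fun e => G.o e = v), Complex.normSq (w e) = 1 := by
      intro v
      rw [← hw.2 v]
      exact Finset.sum_congr rfl fun e _ => (Complex.sq_norm _).symm
    -- base sum identity
    have base : ∑ e, Complex.normSq (w e) * Complex.normSq (f (G.o e))
        = ∑ v, Complex.normSq (f v) := by
      rw [← fiber_sum G (fun e => Complex.normSq (w e) * Complex.normSq (f (G.o e)))]
      refine Finset.sum_congr rfl fun v _ => ?_
      calc ∑ e ∈ univ.filter (fun e => G.o e = v),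
            Complex.normSq (w e) * Complex.normSq (f (G.o e))
          = ∑ e ∈ univ.filter (fun e => G.o e = v),
            Complex.normSq (w e) * Complex.normSq (f v) := by
            refine Finset.sum_congr rfl fun e he => ?_
            rw [mem_filter] at he
            rw [he.2]
        _ = Complex.normSq (f v) := by rw [← Finset.sum_mul, hw1 v, one_mul]
    have RA : ∑ e, Complex.normSq (w e * f (G.o e)) = ∑ v, Complex.normSq (f v) := by
      rw [← base]
      exact Finset.sum_congr rfl fun e _ => Complex.normSq_mul _ _
    have RB : ∑ e, Complex.normSq
        (Complex.exp (-(θ e : ℂ) * Complex.I) * w (G.rev e) * f (G.t e))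
        = ∑ v, Complex.normSq (f v) := by
      calc ∑ e, Complex.normSq
            (Complex.exp (-(θ e : ℂ) * Complex.I) * w (G.rev e) * f (G.t e))
          = ∑ e, Complex.normSq (w (G.rev e)) * Complex.normSq (f (G.t e)) := by
            refine Finset.sum_congr rfl fun e _ => ?_
            rw [Complex.normSq_mul, Complex.normSq_mul, normSq_exp, one_mul]
        _ = ∑ e, Complex.normSq (w (G.rev (G.rev e))) * Complex.normSq (f (G.t (G.rev e))) :=
            (rev_sum G fun e => Complex.normSq (w (G.rev e)) * Complex.normSq (f (G.t e))).symm
        _ = ∑ e, Complex.normSq (w e) * Complex.normSq (f (G.o e)) := by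
            refine Finset.sum_congr rfl fun e _ => ?_
            rw [G.rev_rev, t_rev]
        _ = ∑ v, Complex.normSq (f v) := base
    have SAB : ∑ e, (starRingEnd ℂ) (w e * f (G.o e)) *
        (Complex.exp (-(θ e : ℂ) * Complex.I) * w (G.rev e) * f (G.t e))
        = ∑ v, ((Complex.normSq (f v) : ℝ) : ℂ) := by
      rw [← fiber_sum G (fun e => (starRingEnd ℂ) (w e * f (G.o e)) *
        (Complex.exp (-(θ e : ℂ) * Complex.I) * w (G.rev e) * f (G.t e)))]
      refine Finset.sum_congr rfl fun v _ => ?_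
      calc ∑ e ∈ univ.filter (fun e => G.o e = v), (starRingEnd ℂ) (w e * f (G.o e)) *
            (Complex.exp (-(θ e : ℂ) * Complex.I) * w (G.rev e) * f (G.t e))
          = (starRingEnd ℂ) (f v) * ∑ e ∈ univ.filter (fun e => G.o e = v),
            (starRingEnd ℂ) (w e) *
              (Complex.exp (-(θ e : ℂ) * Complex.I) * w (G.rev e) * f (G.t e)) := by
            rw [Finset.mul_sum]
            refine Finset.sum_congr rfl fun e he => ?_
            rw [mem_filter] at he
            rw [map_mul, he.2]
            ring
        _ = (starRingEnd ℂ) (f v) * f v := by rw [hT v]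
        _ = ((Complex.normSq (f v) : ℝ) : ℂ) := by rw [mul_comm, Complex.mul_conj]
    -- the equality d_A* f = d_B* f
    have hzero : ∀ e, w e * f (G.o e)
        = Complex.exp (-(θ e : ℂ) * Complex.I) * w (G.rev e) * f (G.t e) := by
      have expand : ∀ z z' : ℂ, ((Complex.normSq (z - z') : ℝ) : ℂ)
          = (starRingEnd ℂ) z * z + (starRingEnd ℂ) z' * z'
            - (starRingEnd ℂ) z * z' - (starRingEnd ℂ) z' * z := by
        intro z z'
        rw [show ((Complex.normSq (z - z') : ℝ) : ℂ) = (starRingEnd ℂ) (z - z') * (z - z') from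
          by rw [mul_comm, Complex.mul_conj], map_sub]
        ring
      have SA : ∑ e, (starRingEnd ℂ) (w e * f (G.o e)) * (w e * f (G.o e))
          = ∑ v, ((Complex.normSq (f v) : ℝ) : ℂ) := by
        calc ∑ e, (starRingEnd ℂ) (w e * f (G.o e)) * (w e * f (G.o e))
            = ∑ e, ((Complex.normSq (w e * f (G.o e)) : ℝ) : ℂ) := by
              refine Finset.sum_congr rfl fun e _ => ?_
              rw [mul_comm, Complex.mul_conj]
          _ = ((∑ e, Complex.normSq (w e * f (G.o e)) : ℝ) : ℂ) := by
              rw [Complex.ofReal_sum]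
          _ = ((∑ v, Complex.normSq (f v) : ℝ) : ℂ) := by rw [RA]
          _ = ∑ v, ((Complex.normSq (f v) : ℝ) : ℂ) := by rw [Complex.ofReal_sum]
      have SB : ∑ e, (starRingEnd ℂ) (Complex.exp (-(θ e : ℂ) * Complex.I) * w (G.rev e) * f (G.t e)) *
          (Complex.exp (-(θ e : ℂ) * Complex.I) * w (G.rev e) * f (G.t e))
          = ∑ v, ((Complex.normSq (f v) : ℝ) : ℂ) := by
        calc ∑ e, (starRingEnd ℂ) (Complex.exp (-(θ e : ℂ) * Complex.I) * w (G.rev e) * f (G.t e)) *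
            (Complex.exp (-(θ e : ℂ) * Complex.I) * w (G.rev e) * f (G.t e))
            = ∑ e, ((Complex.normSq
              (Complex.exp (-(θ e : ℂ) * Complex.I) * w (G.rev e) * f (G.t e)) : ℝ) : ℂ) := by
              refine Finset.sum_congr rfl fun e _ => ?_
              rw [mul_comm, Complex.mul_conj]
          _ = ((∑ e, Complex.normSq
              (Complex.exp (-(θ e : ℂ) * Complex.I) * w (G.rev e) * f (G.t e)) : ℝ) : ℂ) := by
              rw [Complex.ofReal_sum]
          _ = ((∑ v, Complex.normSq (f v) : ℝ) : ℂ) := by rw [RB]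
          _ = ∑ v, ((Complex.normSq (f v) : ℝ) : ℂ) := by rw [Complex.ofReal_sum]
      have SBA : ∑ e, (starRingEnd ℂ) (Complex.exp (-(θ e : ℂ) * Complex.I) * w (G.rev e) * f (G.t e)) *
          (w e * f (G.o e))
          = ∑ v, ((Complex.normSq (f v) : ℝ) : ℂ) := by
        have h1 : ∑ e, (starRingEnd ℂ) (Complex.exp (-(θ e : ℂ) * Complex.I) * w (G.rev e) * f (G.t e)) *
            (w e * f (G.o e))
            = (starRingEnd ℂ) (∑ e, (starRingEnd ℂ) (w e * f (G.o e)) *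
              (Complex.exp (-(θ e : ℂ) * Complex.I) * w (G.rev e) * f (G.t e))) := by
          rw [map_sum]
          refine Finset.sum_congr rfl fun e _ => ?_
          conv_rhs => rw [map_mul, Complex.conj_conj]
          ring
        rw [h1, SAB, map_sum]
        refine Finset.sum_congr rfl fun v _ => ?_
        rw [Complex.conj_ofReal]
      have hC : ∑ e, ((Complex.normSq (w e * f (G.o e)
          - Complex.exp (-(θ e : ℂ) * Complex.I) * w (G.rev e) * f (G.t e)) : ℝ) : ℂ) = 0 := by
        simp only [expand]
        rw [Finset.sum_sub_distrib, Finset.sum_sub_distrib, Finset.sum_add_distrib,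
          SA, SB, SAB, SBA]
        ring
      have hR : ∑ e, Complex.normSq (w e * f (G.o e)
          - Complex.exp (-(θ e : ℂ) * Complex.I) * w (G.rev e) * f (G.t e)) = 0 := by
        rw [← Complex.ofReal_sum] at hC
        exact_mod_cast hC
      intro e
      have h := (Finset.sum_eq_zero_iff_of_nonneg
        (fun e _ => Complex.normSq_nonneg _)).mp hR e (mem_univ e)
      exact sub_eq_zero.mp (Complex.normSq_eq_zero.mp h)
    -- f vanishes nowhere
    have hne : ∀ v, f v ≠ 0 := by
      obtain ⟨v0, hv0⟩ : ∃ v, f v ≠ 0 := by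
        by_contra h
        push_neg at h
        exact hf (funext h)
      intro v
      induction hG v0 v with
      | refl => exact hv0
      | tail _ hstep ih =>
        obtain ⟨e, he1, he2⟩ := hstep
        have h1 : w e * f (G.o e) ≠ 0 := mul_ne_zero (hw.1 e) (by rw [he1]; exact ih)
        rw [hzero e] at h1
        have h2 := right_ne_zero_of_mul h1
        rwa [he2] at h2
    refine ⟨fun v => Complex.normSq (f v), fun v => Complex.normSq_pos.mpr (hne v), ?_⟩
    intro e
    have h := congrArg Complex.normSq (hzero e)
    rw [Complex.normSq_mul, Complex.normSq_mul, Complex.normSq_mul, normSq_exp, one_mul] at h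
    show Complex.normSq (f (G.o e)) * ‖w e‖ ^ 2
        = Complex.normSq (f (G.t e)) * ‖w (G.rev e)‖ ^ 2
    rw [Complex.sq_norm, Complex.sq_norm]
    linear_combination h
end

section
/- Let G=(V,D) be a finite connected symmetric digraph, let θ be any 1-form on G, and take the Grover weight w(e) = 1/√deg(o(e)). Then: (a) 1 is an eigenvalue of the discriminant T^{(w,θ)} = d_A d_B* if and only if Σ_{j=1}^n θ(e_j) ∈ 2πℤ for every closed path (e₁,…,e_n) in G; (b) −1 is an eigenvalue of T^{(w,θ)} if and only if Σ_{j=1}^n θ(e_j) + nπ ∈ 2πℤ for every closed path (e₁,…,e_n) of length n in G. In each case the eigenvalue, when it occurs, is simple (multiplicity one). -/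
open Finset

/-- a closed path of length `n`: consecutive arcs are composable, cyclically. -/
def SymDigraph.IsClosedPath (G : SymDigraph) {n : ℕ} (c : Fin n → G.D) : Prop :=
  ∀ j : Fin n,
    G.t (c j) = G.o (c ⟨(j.1 + 1) % n, Nat.mod_lt _ (Nat.lt_of_le_of_lt (Nat.zero_le _) j.2)⟩)

/-- the Grover weight `w(e) = 1/√(deg (o e))` -/
noncomputable def SymDigraph.groverWeight (G : SymDigraph) : G.D → ℂ :=
  fun e => (Real.sqrt (G.deg (G.o e)) : ℂ)⁻¹

namespace SymDigraph

variable (G : SymDigraph)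

lemma deg_pos (v : G.V) : 0 < G.deg v := by
  obtain ⟨e, he⟩ := G.exists_arc v
  exact Finset.card_pos.mpr ⟨e, by simp [he]⟩

lemma t_rev (e : G.D) : G.t (G.rev e) = G.o e := by
  rw [← G.o_rev, G.rev_rev]

/-- `√(deg v)` as a real number -/
noncomputable def Wv (v : G.V) : ℝ := Real.sqrt (G.deg v)

lemma Wv_pos (v : G.V) : 0 < G.Wv v :=
  Real.sqrt_pos.mpr (by exact_mod_cast G.deg_pos v)

lemma Wv_ne_zero (v : G.V) : (G.Wv v : ℂ) ≠ 0 := by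
  exact_mod_cast (G.Wv_pos v).ne'

lemma Wv_sq (v : G.V) : (G.Wv v : ℂ) * (G.Wv v : ℂ) = (G.deg v : ℂ) := by
  rw [← Complex.ofReal_mul, Wv, Real.mul_self_sqrt (by positivity)]
  norm_num

lemma grover_eq (e : G.D) : G.groverWeight e = ((G.Wv (G.o e) : ℂ))⁻¹ := rfl

lemma conj_grover (e : G.D) : (starRingEnd ℂ) (G.groverWeight e) = G.groverWeight e := by
  rw [grover_eq, map_inv₀, Complex.conj_ofReal]

lemma discT_apply_s9 (w : G.D → ℂ) (θ : G.D → ℝ) (f : G.V → ℂ) (v : G.V) :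
    G.discT w θ f v = ∑ e ∈ univ.filter (fun e => G.o e = v),
      (starRingEnd ℂ) (w e) * (Complex.exp (-(θ e : ℂ) * Complex.I) * w (G.rev e) * f (G.t e)) :=
  rfl

lemma abs_exp_theta (x : ℝ) : ‖Complex.exp (-(x : ℂ) * Complex.I)‖ = 1 := by
  rw [show (-(x : ℂ)) = ((-x : ℝ) : ℂ) by push_cast; ring]
  exact Complex.norm_exp_ofReal_mul_I _

lemma normSq_exp_theta (x : ℝ) : Complex.normSq (Complex.exp (-(x : ℂ) * Complex.I)) = 1 := by
  rw [Complex.normSq_eq_norm_sq, abs_exp_theta]; norm_num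

/-- the pointwise form of the eigenvalue equation `T f = s • f`, in terms of
`g v = f v / √(deg v)` -/
lemma eig_iff (θ : G.D → ℝ) (s : ℂ) (f : G.V → ℂ) :
    G.discT G.groverWeight θ f = s • f ↔
      ∀ v, ∑ e ∈ univ.filter (fun e => G.o e = v),
          Complex.exp (-(θ e : ℂ) * Complex.I) * (f (G.t e) * ((G.Wv (G.t e) : ℂ))⁻¹)
        = s * (G.deg v) * (f v * ((G.Wv v : ℂ))⁻¹) := by
  rw [funext_iff]
  refine forall_congr' fun v => ?_
  rw [discT_apply_s9]
  have hrw : ∀ e ∈ univ.filter (fun e => G.o e = v),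
      (starRingEnd ℂ) (G.groverWeight e) *
        (Complex.exp (-(θ e : ℂ) * Complex.I) * G.groverWeight (G.rev e) * f (G.t e))
      = ((G.Wv v : ℂ))⁻¹ *
        (Complex.exp (-(θ e : ℂ) * Complex.I) * (f (G.t e) * ((G.Wv (G.t e) : ℂ))⁻¹)) := by
    intro e he
    rw [Finset.mem_filter] at he
    rw [conj_grover, grover_eq, grover_eq, G.o_rev, he.2]
    ring
  rw [Finset.sum_congr rfl hrw, ← Finset.mul_sum]
  have hW := G.Wv_ne_zero v
  constructor
  · intro h
    rw [Pi.smul_apply, smul_eq_mul] at h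
    have h2 : ∑ e ∈ univ.filter (fun e => G.o e = v),
        Complex.exp (-(θ e : ℂ) * Complex.I) * (f (G.t e) * ((G.Wv (G.t e) : ℂ))⁻¹)
        = (G.Wv v : ℂ) * (s * f v) := by
      rw [← h, ← mul_assoc, mul_inv_cancel₀ hW, one_mul]
    rw [h2, ← G.Wv_sq v]
    field_simp
  · intro h
    rw [h, Pi.smul_apply, smul_eq_mul, ← G.Wv_sq v]
    field_simp

end SymDigraph

namespace SymDigraph

variable (G : SymDigraph)

/-- arc reversal as an equivalence -/
def revEquiv : G.D ≃ G.D := ⟨G.rev, G.rev, G.rev_rev, G.rev_rev⟩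

lemma sum_deg_normSq (g : G.V → ℂ) :
    ∑ e, Complex.normSq (g (G.o e)) = ∑ v, (G.deg v : ℝ) * Complex.normSq (g v) := by
  rw [← Finset.sum_fiberwise univ G.o (fun e => Complex.normSq (g (G.o e)))]
  refine Finset.sum_congr rfl fun v _ => ?_
  rw [Finset.sum_congr rfl (fun e he => ?_), Finset.sum_const, deg, nsmul_eq_mul]
  rw [Finset.mem_filter] at he
  rw [he.2]

lemma step_eq (θ : G.D → ℝ) (s : ℂ) (hs : s = 1 ∨ s = -1) (g : G.V → ℂ)
    (h : ∀ v, ∑ e ∈ univ.filter (fun e => G.o e = v),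
        Complex.exp (-(θ e : ℂ) * Complex.I) * g (G.t e) = s * (G.deg v) * g v) :
    ∀ e, Complex.exp (-(θ e : ℂ) * Complex.I) * g (G.t e) = s * g (G.o e) := by
  have hs2 : Complex.normSq s = 1 := by rcases hs with h'|h' <;> simp [h']
  have hsc : (starRingEnd ℂ) s * s = 1 := by rcases hs with h'|h' <;> simp [h']
  set D : ℝ := ∑ v, (G.deg v : ℝ) * Complex.normSq (g v) with hD
  have hT1 : ∑ e, Complex.normSq (s * g (G.o e)) = D := by
    simp only [Complex.normSq_mul, hs2, one_mul]
    exact G.sum_deg_normSq g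
  have hT2 : ∑ e, Complex.normSq (Complex.exp (-(θ e : ℂ) * Complex.I) * g (G.t e)) = D := by
    simp only [Complex.normSq_mul, normSq_exp_theta, one_mul]
    have hre : ∑ e, Complex.normSq (g (G.t e)) = ∑ e, Complex.normSq (g (G.o e)) := by
      refine Fintype.sum_equiv G.revEquiv _ _ fun e => ?_
      show Complex.normSq (g (G.t e)) = Complex.normSq (g (G.o (G.rev e)))
      rw [G.o_rev]
    rw [hre]
    exact G.sum_deg_normSq g
  have hcross : ∑ e, ((s * g (G.o e)) *
      (starRingEnd ℂ) (Complex.exp (-(θ e : ℂ) * Complex.I) * g (G.t e))) = (D : ℂ) := by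
    rw [← Finset.sum_fiberwise univ G.o (fun e => (s * g (G.o e)) *
      (starRingEnd ℂ) (Complex.exp (-(θ e : ℂ) * Complex.I) * g (G.t e)))]
    have hfib : ∀ v : G.V, ∑ e ∈ univ.filter (fun e => G.o e = v), ((s * g (G.o e)) *
        (starRingEnd ℂ) (Complex.exp (-(θ e : ℂ) * Complex.I) * g (G.t e)))
        = (G.deg v : ℂ) * Complex.normSq (g v) := by
      intro v
      have h1 : ∀ e ∈ univ.filter (fun e => G.o e = v), ((s * g (G.o e)) *
          (starRingEnd ℂ) (Complex.exp (-(θ e : ℂ) * Complex.I) * g (G.t e)))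
          = (s * g v) * (starRingEnd ℂ) (Complex.exp (-(θ e : ℂ) * Complex.I) * g (G.t e)) := by
        intro e he
        rw [Finset.mem_filter] at he
        rw [he.2]
      rw [Finset.sum_congr rfl h1, ← Finset.mul_sum, ← map_sum, h v]
      rw [map_mul, map_mul, Complex.conj_natCast]
      have : s * g v * ((starRingEnd ℂ) s * (G.deg v : ℂ) * (starRingEnd ℂ) (g v))
          = ((starRingEnd ℂ) s * s) * (G.deg v : ℂ) * (g v * (starRingEnd ℂ) (g v)) := by ring
      rw [this, hsc, one_mul, Complex.mul_conj]
    rw [Finset.sum_congr rfl (fun v _ => hfib v), hD]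
    push_cast
    ring
  have hzero : ∑ e, Complex.normSq (s * g (G.o e)
      - Complex.exp (-(θ e : ℂ) * Complex.I) * g (G.t e)) = 0 := by
    simp only [Complex.normSq_sub]
    rw [Finset.sum_sub_distrib, Finset.sum_add_distrib, hT1, hT2, ← Finset.mul_sum]
    have hre : ∑ e, ((s * g (G.o e)) *
        (starRingEnd ℂ) (Complex.exp (-(θ e : ℂ) * Complex.I) * g (G.t e))).re = D := by
      rw [← Complex.re_sum, hcross, Complex.ofReal_re]
    rw [hre]
    ring
  intro e
  have he0 : Complex.normSq (s * g (G.o e)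
      - Complex.exp (-(θ e : ℂ) * Complex.I) * g (G.t e)) = 0 := by
    have := (Finset.sum_eq_zero_iff_of_nonneg
      (fun e _ => Complex.normSq_nonneg _)).mp hzero e (Finset.mem_univ e)
    exact this
  have := sub_eq_zero.mp (Complex.normSq_eq_zero.mp he0)
  exact this.symm

end SymDigraph

namespace SymDigraph

variable (G : SymDigraph)

lemma abs_const (hG : G.Connected) (g : G.V → ℂ)
    (hstep : ∀ e, ‖g (G.t e)‖ = ‖g (G.o e)‖) :
    ∀ u v : G.V, ‖g u‖ = ‖g v‖ := by
  intro u v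
  induction hG u v with
  | refl => rfl
  | tail hab step ih =>
    obtain ⟨e, he1, he2⟩ := step
    rw [ih, ← he1, ← he2, hstep e]

lemma step_abs (θ : G.D → ℝ) (s : ℂ) (hs : s = 1 ∨ s = -1) (g : G.V → ℂ)
    (h : ∀ e, Complex.exp (-(θ e : ℂ) * Complex.I) * g (G.t e) = s * g (G.o e)) :
    ∀ e, ‖g (G.t e)‖ = ‖g (G.o e)‖ := by
  intro e
  have := congrArg norm (h e)
  rw [norm_mul, norm_mul, abs_exp_theta, one_mul] at this
  rcases hs with h'|h' <;> simp [h'] at this <;> exact this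

/-- an eigenvector of `T` for eigenvalue `±1` vanishing at one vertex vanishes identically -/
lemma eig_vanish (hG : G.Connected) (θ : G.D → ℝ) (s : ℂ) (hs : s = 1 ∨ s = -1)
    (f : G.V → ℂ) (hf : G.discT G.groverWeight θ f = s • f)
    (v₀ : G.V) (h0 : f v₀ = 0) : f = 0 := by
  set g : G.V → ℂ := fun v => f v * ((G.Wv v : ℂ))⁻¹ with hg
  have hpt := (G.eig_iff θ s f).mp hf
  have hse := G.step_eq θ s hs g hpt
  have habs := G.abs_const hG g (G.step_abs θ s hs g hse)
  funext v
  have : ‖g v‖ = 0 := by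
    rw [habs v v₀]
    simp [hg, h0]
  have hgv : g v = 0 := by
    rwa [norm_eq_zero] at this
  have := mul_eq_zero.mp hgv
  rcases this with h|h
  · exact h
  · exact absurd h (by simpa using G.Wv_ne_zero v)

/-- a walk along arcs from `u` to `v` -/
def Walk : List G.D → G.V → G.V → Prop
  | [], u, v => u = v
  | e :: l, u, v => G.o e = u ∧ Walk l (G.t e) v

lemma walk_append {l l' : List G.D} {u v w : G.V} (h : G.Walk l u v) (h' : G.Walk l' v w) :
    G.Walk (l ++ l') u w := by
  induction l generalizing u with
  | nil => rw [Walk] at h; subst h; exact h'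
  | cons e l ih => exact ⟨h.1, ih h.2⟩

lemma exists_walk (hG : G.Connected) (u v : G.V) : ∃ l, G.Walk l u v := by
  induction hG u v with
  | refl => exact ⟨[], rfl⟩
  | tail hab step ih =>
    obtain ⟨l, hl⟩ := ih
    obtain ⟨e, he1, he2⟩ := step
    refine ⟨l ++ [e], G.walk_append hl ?_⟩
    rw [← he2]
    exact ⟨he1, rfl⟩

lemma walk_reverse {l : List G.D} {u v : G.V} (h : G.Walk l u v) :
    G.Walk ((l.map G.rev).reverse) v u := by
  induction l generalizing u with
  | nil => rw [Walk] at h; subst h; exact rfl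
  | cons e l ih =>
    obtain ⟨he, hw⟩ := h
    have := ih hw
    simp only [List.map_cons, List.reverse_cons]
    refine G.walk_append this ?_
    exact ⟨G.o_rev e, by rw [Walk, G.t_rev, he]⟩

lemma walk_head {l : List G.D} {u v : G.V} (h : G.Walk l u v) (hl : 0 < l.length) :
    G.o (l.get ⟨0, hl⟩) = u := by
  cases l with
  | nil => simp at hl
  | cons e l => exact h.1

lemma walk_chain {l : List G.D} {u v : G.V} (h : G.Walk l u v) :
    ∀ i (hi : i + 1 < l.length),
      G.t (l.get ⟨i, Nat.lt_of_succ_lt hi⟩) = G.o (l.get ⟨i + 1, hi⟩) := by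
  induction l generalizing u with
  | nil => intro i hi; simp at hi
  | cons e l ih =>
    intro i hi
    cases i with
    | zero =>
      have hl : 0 < l.length := by simpa using hi
      simpa using (G.walk_head h.2 hl).symm
    | succ i =>
      have hi' : i + 1 < l.length := by simpa using hi
      simpa using ih h.2 i hi'

lemma walk_last {l : List G.D} {u v : G.V} (h : G.Walk l u v) (hl : 0 < l.length) :
    G.t (l.get ⟨l.length - 1, by omega⟩) = v := by
  induction l generalizing u with
  | nil => simp at hl
  | cons e l ih =>
    cases l with
    | nil => exact h.2
    | cons e' l' =>
      have := ih h.2 (by simp)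
      simpa using this

lemma walk_closed_path {l : List G.D} {u : G.V} (h : G.Walk l u u) (hl : 0 < l.length) :
    G.IsClosedPath (fun j : Fin l.length => l.get j) := by
  intro j
  by_cases hj : j.1 + 1 < l.length
  · have hmod : (j.1 + 1) % l.length = j.1 + 1 := Nat.mod_eq_of_lt hj
    have hfin : (⟨(j.1 + 1) % l.length, Nat.mod_lt _ (Nat.lt_of_le_of_lt (Nat.zero_le _) j.2)⟩ :
        Fin l.length) = ⟨j.1 + 1, hj⟩ := Fin.ext hmod
    rw [hfin]
    have := G.walk_chain h j.1 hj
    convert this using 3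
  · have hj1 : j.1 = l.length - 1 := by omega
    have hj2 : j.1 + 1 = l.length := by omega
    have hmod : (j.1 + 1) % l.length = 0 := by rw [hj2, Nat.mod_self]
    have hfin : (⟨(j.1 + 1) % l.length, Nat.mod_lt _ (Nat.lt_of_le_of_lt (Nat.zero_le _) j.2)⟩ :
        Fin l.length) = ⟨0, hl⟩ := Fin.ext hmod
    rw [hfin]
    have h1 : (j : Fin l.length) = ⟨l.length - 1, by omega⟩ := Fin.ext hj1
    rw [h1, G.walk_last h hl, G.walk_head h hl]

end SymDigraph

namespace SymDigraph

variable (G : SymDigraph)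

section Omega

variable (θ : G.D → ℝ) (s : ℂ)

/-- the unimodular arc weight `ω e = s·e^{iθ(e)}` -/
noncomputable def om : G.D → ℂ := fun e => s * Complex.exp ((θ e : ℂ) * Complex.I)

lemma om_ne_zero (hs : s = 1 ∨ s = -1) (e : G.D) : G.om θ s e ≠ 0 := by
  have : s ≠ 0 := by rcases hs with h|h <;> simp [h]
  exact mul_ne_zero this (Complex.exp_ne_zero _)

lemma om_rev_mul (hθ : G.IsOneForm θ) (hs : s = 1 ∨ s = -1) (e : G.D) :
    G.om θ s (G.rev e) * G.om θ s e = 1 := by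
  have h1 : G.om θ s (G.rev e) * G.om θ s e
      = (s * s) * Complex.exp ((θ (G.rev e) : ℂ) * Complex.I + (θ e : ℂ) * Complex.I) := by
    rw [Complex.exp_add, om, om]; ring
  rw [h1, hθ e]
  have : ((-θ e : ℝ) : ℂ) * Complex.I + (θ e : ℂ) * Complex.I = 0 := by push_cast; ring
  rw [this, Complex.exp_zero, mul_one]
  rcases hs with h|h <;> simp [h]

lemma om_prod_ne_zero (hs : s = 1 ∨ s = -1) (l : List G.D) :
    (l.map (G.om θ s)).prod ≠ 0 := by
  refine List.prod_ne_zero fun h0 => ?_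
  obtain ⟨e, _, he⟩ := List.mem_map.mp h0
  exact G.om_ne_zero θ s hs e he

lemma om_prod_rev (hθ : G.IsOneForm θ) (hs : s = 1 ∨ s = -1) (l : List G.D) :
    ((l.map G.rev).reverse.map (G.om θ s)).prod * (l.map (G.om θ s)).prod = 1 := by
  rw [List.map_reverse, List.prod_reverse, List.map_map, ← List.prod_map_mul]
  have : ∀ x ∈ l, (G.om θ s ∘ G.rev) x * G.om θ s x = 1 := fun x _ =>
    G.om_rev_mul θ s hθ hs x
  rw [List.map_congr_left this]
  simp

/-- any two walks between the same endpoints have the same `ω`-product, given that all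
closed walks have `ω`-product 1 -/
lemma walk_prod_eq (hθ : G.IsOneForm θ) (hs : s = 1 ∨ s = -1)
    (H : ∀ (l : List G.D) (u : G.V), G.Walk l u u → 0 < l.length →
      (l.map (G.om θ s)).prod = 1)
    {l l' : List G.D} {u v : G.V} (h : G.Walk l u v) (h' : G.Walk l' u v) :
    (l.map (G.om θ s)).prod = (l'.map (G.om θ s)).prod := by
  by_cases hlen : l.length = 0 ∧ l'.length = 0
  · obtain ⟨h1, h2⟩ := hlen
    rw [List.length_eq_zero_iff.mp h1, List.length_eq_zero_iff.mp h2]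
  · have hW : G.Walk (l ++ (l'.map G.rev).reverse) u u :=
      G.walk_append h (G.walk_reverse h')
    have hpos : 0 < (l ++ (l'.map G.rev).reverse).length := by
      simp only [List.length_append, List.length_reverse, List.length_map]
      omega
    have h1 := H _ u hW hpos
    rw [List.map_append, List.prod_append] at h1
    have h2 := G.om_prod_rev θ s hθ hs l'
    have hr : ((l'.map G.rev).reverse.map (G.om θ s)).prod ≠ 0 := by
      rw [← List.map_reverse]
      exact G.om_prod_ne_zero θ s hs _
    have key : (l.map (G.om θ s)).prod * ((l'.map G.rev).reverse.map (G.om θ s)).prod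
        = (l'.map (G.om θ s)).prod * ((l'.map G.rev).reverse.map (G.om θ s)).prod := by
      rw [h1, mul_comm, h2]
    exact mul_right_cancel₀ hr key

/-- construction of a nonvanishing function satisfying the multiplicative cocycle relation -/
lemma exists_g (hG : G.Connected) (hθ : G.IsOneForm θ) (hs : s = 1 ∨ s = -1)
    (H : ∀ (l : List G.D) (u : G.V), G.Walk l u u → 0 < l.length →
      (l.map (G.om θ s)).prod = 1) :
    ∃ g : G.V → ℂ, (∀ v, g v ≠ 0) ∧ ∀ e, g (G.t e) = G.om θ s e * g (G.o e) := by
  obtain ⟨v₀⟩ := G.nonemptyV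
  have hex : ∀ v, ∃ l, G.Walk l v₀ v := fun v => G.exists_walk hG v₀ v
  choose L hL using hex
  refine ⟨fun v => ((L v).map (G.om θ s)).prod, fun v => G.om_prod_ne_zero θ s hs _, fun e => ?_⟩
  have h1 : G.Walk (L (G.o e) ++ [e]) v₀ (G.t e) :=
    G.walk_append (hL (G.o e)) ⟨rfl, rfl⟩
  have h2 := G.walk_prod_eq θ s hθ hs H (hL (G.t e)) h1
  show ((L (G.t e)).map (G.om θ s)).prod = G.om θ s e * ((L (G.o e)).map (G.om θ s)).prod
  rw [h2, List.map_append, List.prod_append]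
  simp [mul_comm]

end Omega

end SymDigraph

namespace SymDigraph

variable (G : SymDigraph)

lemma fin_prod_om (θ : G.D → ℝ) (s : ℂ) {n : ℕ} (c : Fin n → G.D) :
    ∏ j, G.om θ s (c j)
      = s ^ n * Complex.exp (((∑ j, θ (c j) : ℝ) : ℂ) * Complex.I) := by
  simp only [om]
  rw [Finset.prod_mul_distrib, Finset.prod_const, Finset.card_univ, Fintype.card_fin,
    ← Complex.exp_sum]
  congr 1
  push_cast
  rw [Finset.sum_mul]

lemma exp_eq_one_of_int (r : ℝ) (z : ℤ) (h : r = 2 * Real.pi * z) :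
    Complex.exp ((r : ℂ) * Complex.I) = 1 := by
  rw [h]
  push_cast
  rw [show ((2 : ℂ) * (Real.pi : ℂ) * (z : ℂ)) * Complex.I
    = (z : ℂ) * (2 * (Real.pi : ℂ) * Complex.I) by ring]
  exact Complex.exp_int_mul_two_pi_mul_I z

lemma exists_int_of_exp_eq_one (r : ℝ) (h : Complex.exp ((r : ℂ) * Complex.I) = 1) :
    ∃ z : ℤ, r = 2 * Real.pi * z := by
  obtain ⟨k, hk⟩ := Complex.exp_eq_one_iff.mp h
  refine ⟨k, ?_⟩
  have h2 : (r : ℂ) * Complex.I = ((2 * Real.pi * k : ℝ) : ℂ) * Complex.I := by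
    rw [hk]; push_cast; ring
  have h3 := mul_right_cancel₀ Complex.I_ne_zero h2
  exact_mod_cast h3

lemma neg_one_pow_eq_exp (n : ℕ) :
    ((-1 : ℂ)) ^ n = Complex.exp (((n * Real.pi : ℝ) : ℂ) * Complex.I) := by
  push_cast
  rw [show ((n : ℂ) * (Real.pi : ℂ)) * Complex.I = (n : ℂ) * ((Real.pi : ℂ) * Complex.I) by ring,
    Complex.exp_nat_mul, Complex.exp_pi_mul_I]

lemma cycle_eq (θ : G.D → ℝ) (s : ℂ) (g : G.V → ℂ)
    (hse : ∀ e, Complex.exp (-(θ e : ℂ) * Complex.I) * g (G.t e) = s * g (G.o e))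
    (hgv : ∀ v, g v ≠ 0) :
    ∀ n, 0 < n → ∀ c : Fin n → G.D, G.IsClosedPath c →
      s ^ n * Complex.exp (((∑ j, θ (c j) : ℝ) : ℂ) * Complex.I) = 1 := by
  intro n hn c hc
  obtain ⟨m, rfl⟩ : ∃ m, n = m + 1 := ⟨n - 1, by omega⟩
  have hprod : ∏ j, (Complex.exp (-(θ (c j) : ℂ) * Complex.I) * g (G.t (c j)))
      = ∏ j, (s * g (G.o (c j))) := Finset.prod_congr rfl fun j _ => hse (c j)
  have hkey : ∀ j : Fin (m + 1),
      (⟨(j.1 + 1) % (m + 1), Nat.mod_lt _ (Nat.lt_of_le_of_lt (Nat.zero_le _) j.2)⟩ :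
        Fin (m + 1)) = j + 1 := by
    intro j
    refine Fin.ext ?_
    show (j.1 + 1) % (m + 1) = (j + 1 : Fin (m + 1)).1
    rw [Fin.add_def]
    show (j.1 + 1) % (m + 1) = (j.1 + (1 : Fin (m + 1)).1) % (m + 1)
    have h1 : (1 : Fin (m + 1)).1 = 1 % (m + 1) := rfl
    rw [h1]
    conv_lhs => rw [Nat.add_mod]
    conv_rhs => rw [Nat.add_mod, Nat.mod_mod_of_dvd _ dvd_rfl]
  have hrot : ∏ j, g (G.t (c j)) = ∏ j, g (G.o (c j)) := by
    have h1 : ∀ j, g (G.t (c j)) = g (G.o (c (j + 1))) := by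
      intro j
      rw [hc j, hkey j]
    rw [Finset.prod_congr rfl fun j _ => h1 j]
    have := Equiv.prod_comp (Equiv.addRight (1 : Fin (m + 1))) (fun j => g (G.o (c j)))
    simpa using this
  rw [Finset.prod_mul_distrib, Finset.prod_mul_distrib, hrot, Finset.prod_const,
    Finset.card_univ, Fintype.card_fin] at hprod
  have hP : ∏ j, g (G.o (c j)) ≠ 0 := Finset.prod_ne_zero_iff.mpr fun j _ => hgv _
  have hexp : ∏ j, Complex.exp (-(θ (c j) : ℂ) * Complex.I)
      = Complex.exp (-(((∑ j, θ (c j) : ℝ)) : ℂ) * Complex.I) := by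
    rw [← Complex.exp_sum]
    congr 1
    push_cast
    rw [neg_mul, ← Finset.sum_mul, Finset.sum_neg_distrib, neg_mul]
  rw [hexp] at hprod
  have heq := mul_right_cancel₀ hP hprod
  rw [← heq, ← Complex.exp_add]
  rw [show -(((∑ j, θ (c j) : ℝ)) : ℂ) * Complex.I + (((∑ j, θ (c j) : ℝ)) : ℂ) * Complex.I
    = 0 by ring, Complex.exp_zero]

lemma forward (hG : G.Connected) (θ : G.D → ℝ) (s : ℂ) (hs : s = 1 ∨ s = -1)
    (f : G.V → ℂ) (hf0 : f ≠ 0) (hf : G.discT G.groverWeight θ f = s • f) :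
    ∀ n, 0 < n → ∀ c : Fin n → G.D, G.IsClosedPath c →
      s ^ n * Complex.exp (((∑ j, θ (c j) : ℝ) : ℂ) * Complex.I) = 1 := by
  set g : G.V → ℂ := fun v => f v * ((G.Wv v : ℂ))⁻¹ with hg
  have hpt := (G.eig_iff θ s f).mp hf
  have hse := G.step_eq θ s hs g hpt
  have habs := G.abs_const hG g (G.step_abs θ s hs g hse)
  obtain ⟨v₁, hv₁⟩ := Function.ne_iff.mp hf0
  have hg₁ : g v₁ ≠ 0 := by
    refine mul_ne_zero (by simpa using hv₁) (inv_ne_zero (G.Wv_ne_zero v₁))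
  have hgv : ∀ v, g v ≠ 0 := by
    intro v h0
    apply hg₁
    have h1 := habs v₁ v
    rw [h0, norm_zero] at h1
    exact norm_eq_zero.mp h1
  exact G.cycle_eq θ s g hse hgv

lemma listH (θ : G.D → ℝ) (s : ℂ)
    (cond : ∀ (n : ℕ), 0 < n → ∀ c : Fin n → G.D, G.IsClosedPath c →
      s ^ n * Complex.exp (((∑ j, θ (c j) : ℝ) : ℂ) * Complex.I) = 1) :
    ∀ (l : List G.D) (u : G.V), G.Walk l u u → 0 < l.length →
      (l.map (G.om θ s)).prod = 1 := by
  intro l u hw hl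
  have hc := G.walk_closed_path hw hl
  have h1 := cond l.length hl _ hc
  have h2 : (l.map (G.om θ s)).prod = ∏ j : Fin l.length, G.om θ s (l.get j) := by
    rw [← Fin.prod_univ_fun_getElem l (G.om θ s)]
    simp [List.get_eq_getElem]
  rw [h2, G.fin_prod_om θ s (fun j => l.get j)]
  exact h1

end SymDigraph

namespace SymDigraph

variable (G : SymDigraph)

lemma exists_eigvec (hG : G.Connected) (θ : G.D → ℝ) (hθ : G.IsOneForm θ)
    (s : ℂ) (hs : s = 1 ∨ s = -1)
    (cond : ∀ (n : ℕ), 0 < n → ∀ c : Fin n → G.D, G.IsClosedPath c →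
      s ^ n * Complex.exp (((∑ j, θ (c j) : ℝ) : ℂ) * Complex.I) = 1) :
    ∃ f : G.V → ℂ, f ≠ 0 ∧ G.discT G.groverWeight θ f = s • f := by
  obtain ⟨g, hg0, hgstep⟩ := G.exists_g θ s hG hθ hs (G.listH θ s cond)
  refine ⟨fun v => (G.Wv v : ℂ) * g v, ?_, ?_⟩
  · intro h0
    have v := Classical.arbitrary G.V
    have h1 := congrFun h0 v
    exact (mul_ne_zero (G.Wv_ne_zero v) (hg0 v)) (by simpa using h1)
  · rw [eig_iff]
    intro v
    have hterm : ∀ e ∈ univ.filter (fun e => G.o e = v),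
        Complex.exp (-(θ e : ℂ) * Complex.I) *
          (((G.Wv (G.t e) : ℂ) * g (G.t e)) * ((G.Wv (G.t e) : ℂ))⁻¹)
        = s * g v := by
      intro e he
      rw [Finset.mem_filter] at he
      have h1 : ((G.Wv (G.t e) : ℂ) * g (G.t e)) * ((G.Wv (G.t e) : ℂ))⁻¹ = g (G.t e) := by
        rw [mul_comm, ← mul_assoc, inv_mul_cancel₀ (G.Wv_ne_zero (G.t e)), one_mul]
      rw [h1, hgstep e, he.2, om]
      rw [show Complex.exp (-(θ e : ℂ) * Complex.I) *
            (s * Complex.exp ((θ e : ℂ) * Complex.I) * g v)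
          = s * Complex.exp (-(θ e : ℂ) * Complex.I + (θ e : ℂ) * Complex.I) * g v by
        rw [Complex.exp_add]; ring]
      rw [show -(θ e : ℂ) * Complex.I + (θ e : ℂ) * Complex.I = 0 by ring,
        Complex.exp_zero, mul_one]
    rw [Finset.sum_congr rfl hterm, Finset.sum_const]
    have h3 : (univ.filter fun e => G.o e = v).card = G.deg v := rfl
    have h2 : ((G.Wv v : ℂ) * g v) * ((G.Wv v : ℂ))⁻¹ = g v := by
      rw [mul_comm, ← mul_assoc, inv_mul_cancel₀ (G.Wv_ne_zero v), one_mul]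
    rw [h3, h2, nsmul_eq_mul]
    ring

lemma neg_one_pow_exp' (n : ℕ) :
    Complex.exp ((n : ℂ) * (Real.pi : ℂ) * Complex.I) = (-1 : ℂ) ^ n := by
  rw [show (n : ℂ) * (Real.pi : ℂ) * Complex.I = ((n * Real.pi : ℝ) : ℂ) * Complex.I by
    push_cast; ring, ← neg_one_pow_eq_exp]

end SymDigraph

/-- For a connected finite symmetric digraph with the Grover weight and any
1-form `θ`: (a) `1` is an eigenvalue of `T^{(w,θ)}` iff `∑_j θ(e_j) ∈ 2πℤ` for every closed
path `(e₁,…,e_n)`; (b) `−1` is an eigenvalue of `T^{(w,θ)}` iff `∑_j θ(e_j) + nπ ∈ 2πℤ` for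
every closed path of length `n`. In each case the eigenvalue, when it occurs, is simple. -/
theorem grover_discriminant_pm_one (G : SymDigraph) (hG : G.Connected)
    (θ : G.D → ℝ) (hθ : G.IsOneForm θ) :
    ((∃ f : G.V → ℂ, f ≠ 0 ∧ G.discT G.groverWeight θ f = f) ↔
      ∀ (n : ℕ), 0 < n → ∀ c : Fin n → G.D, G.IsClosedPath c →
        ∃ z : ℤ, ∑ j, θ (c j) = 2 * Real.pi * z) ∧
    ((∃ f : G.V → ℂ, f ≠ 0 ∧ G.discT G.groverWeight θ f = -f) ↔
      ∀ (n : ℕ), 0 < n → ∀ c : Fin n → G.D, G.IsClosedPath c →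
        ∃ z : ℤ, (∑ j, θ (c j)) + n * Real.pi = 2 * Real.pi * z) ∧
    Module.finrank ℂ ↥(LinearMap.ker (G.discT G.groverWeight θ - LinearMap.id)) ≤ 1 ∧
    Module.finrank ℂ ↥(LinearMap.ker (G.discT G.groverWeight θ + LinearMap.id)) ≤ 1 := by
  classical
  have hv₀ : Nonempty G.V := G.nonemptyV
  refine ⟨⟨?_, ?_⟩, ⟨?_, ?_⟩, ?_, ?_⟩
  · -- (a) forward
    rintro ⟨f, hf0, hf⟩ n hn c hc
    have h1 := G.forward hG θ 1 (Or.inl rfl) f hf0 (by rw [one_smul]; exact hf) n hn c hc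
    rw [one_pow, one_mul] at h1
    exact SymDigraph.exists_int_of_exp_eq_one _ h1
  · -- (a) backward
    intro H
    obtain ⟨f, hf0, hf⟩ := G.exists_eigvec hG θ hθ 1 (Or.inl rfl) (by
      intro n hn c hc
      obtain ⟨z, hz⟩ := H n hn c hc
      rw [one_pow, one_mul]
      exact SymDigraph.exp_eq_one_of_int _ z hz)
    rw [one_smul] at hf
    exact ⟨f, hf0, hf⟩
  · -- (b) forward
    rintro ⟨f, hf0, hf⟩ n hn c hc
    have h1 := G.forward hG θ (-1) (Or.inr rfl) f hf0
      (by rw [neg_one_smul]; exact hf) n hn c hc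
    have h2 : Complex.exp (((∑ j, θ (c j)) + n * Real.pi : ℝ) * Complex.I) = 1 := by
      rw [show (((∑ j, θ (c j)) + n * Real.pi : ℝ) : ℂ) * Complex.I
          = ((∑ j, θ (c j) : ℝ) : ℂ) * Complex.I + (n : ℂ) * (Real.pi : ℂ) * Complex.I by
        push_cast; ring, Complex.exp_add, SymDigraph.neg_one_pow_exp' n, mul_comm]
      exact h1
    exact SymDigraph.exists_int_of_exp_eq_one _ h2
  · -- (b) backward
    intro H
    obtain ⟨f, hf0, hf⟩ := G.exists_eigvec hG θ hθ (-1) (Or.inr rfl) (by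
      intro n hn c hc
      obtain ⟨z, hz⟩ := H n hn c hc
      have h2 := SymDigraph.exp_eq_one_of_int _ z hz
      rw [show (((∑ j, θ (c j)) + n * Real.pi : ℝ) : ℂ) * Complex.I
          = ((∑ j, θ (c j) : ℝ) : ℂ) * Complex.I + (n : ℂ) * (Real.pi : ℂ) * Complex.I by
        push_cast; ring, Complex.exp_add, SymDigraph.neg_one_pow_exp' n, mul_comm] at h2
      exact h2)
    rw [neg_one_smul] at hf
    exact ⟨f, hf0, hf⟩
  · -- simplicity for +1
    let K := LinearMap.ker (G.discT G.groverWeight θ - LinearMap.id)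
    let v₀ : G.V := Classical.arbitrary G.V
    let φ : K →ₗ[ℂ] ℂ := (LinearMap.proj v₀).comp K.subtype
    have hinj : Function.Injective φ := by
      rw [← LinearMap.ker_eq_bot, eq_bot_iff]
      intro x hx
      rw [LinearMap.mem_ker] at hx
      have hx2 : ((G.discT G.groverWeight θ - LinearMap.id : (G.V → ℂ) →ₗ[ℂ] (G.V → ℂ))) (x : G.V → ℂ) = 0 :=
        LinearMap.mem_ker.mp x.2
      rw [LinearMap.sub_apply, LinearMap.id_apply, sub_eq_zero] at hx2
      have h0 : (x : G.V → ℂ) = 0 :=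
        G.eig_vanish hG θ 1 (Or.inl rfl) x (by rw [one_smul]; exact hx2) v₀ hx
      rw [Submodule.mem_bot]
      exact Subtype.ext h0
    have hle := LinearMap.finrank_le_finrank_of_injective hinj
    simpa using hle
  · -- simplicity for -1
    let K := LinearMap.ker (G.discT G.groverWeight θ + LinearMap.id)
    let v₀ : G.V := Classical.arbitrary G.V
    let φ : K →ₗ[ℂ] ℂ := (LinearMap.proj v₀).comp K.subtype
    have hinj : Function.Injective φ := by
      rw [← LinearMap.ker_eq_bot, eq_bot_iff]
      intro x hx
      rw [LinearMap.mem_ker] at hx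
      have hx2 : ((G.discT G.groverWeight θ + LinearMap.id : (G.V → ℂ) →ₗ[ℂ] (G.V → ℂ))) (x : G.V → ℂ) = 0 :=
        LinearMap.mem_ker.mp x.2
      rw [LinearMap.add_apply, LinearMap.id_apply, add_eq_zero_iff_eq_neg] at hx2
      have h0 : (x : G.V → ℂ) = 0 :=
        G.eig_vanish hG θ (-1) (Or.inr rfl) x (by rw [neg_one_smul]; exact hx2) v₀ hx
      rw [Submodule.mem_bot]
      exact Subtype.ext h0
    have hle := LinearMap.finrank_le_finrank_of_injective hinj
    simpa using hle
end
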